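/- arXiv:2507.19453 — 9 statements merged into one kernel-verified Lean document; each statement's English description precedes it below -/
import Mathlib

section
/- Let μ : B(H) → ℂ be a linear functional such that μ(a^* a) is a nonnegative real number for every a in the unital subalgebra of B(H) generated by L_1,…,L_d. Define K_μ(σ,τ) := μ((L^τ)^* L^σ) for σ,τ ∈ F_d^+. Then K_μ is a multi-Toeplitz kernel, i.e.: (i) K_μ(τσ, τσ') = K_μ(σ,σ') for all τ,σ,σ' ∈ F_d^+; (ii) K_μ(σ,τ) = 0 whenever there is no α ∈ F_d^+ with σ = τα or τ = σα; (iii) for every finite subset S ⊆ F_d^+ the matrix [K_μ(σ,τ)]_{σ,τ∈S} is positive semidefinite. -/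
open scoped ComplexOrder

/-- `L^σ = L_{σ_1} ⋯ L_{σ_n}` for a word `σ` over the alphabet of `d` generators. -/
noncomputable def Lword {d : ℕ} {H : Type*} [NormedAddCommGroup H] [InnerProductSpace ℂ H]
    (L : Fin d → H →L[ℂ] H) (σ : List (Fin d)) : H →L[ℂ] H :=
  (σ.map L).prod

/-- The kernel `K_μ(σ, τ) := μ((L^τ)^* L^σ)` associated to a functional `μ` on `B(H)`. -/
noncomputable def Kker {d : ℕ} {H : Type*} [NormedAddCommGroup H] [InnerProductSpace ℂ H]
    [CompleteSpace H] (μ : (H →L[ℂ] H) →ₗ[ℂ] ℂ) (L : Fin d → H →L[ℂ] H)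
    (σ τ : List (Fin d)) : ℂ :=
  μ (star (Lword L τ) * Lword L σ)

section Aux

variable {d : ℕ} {H : Type*} [NormedAddCommGroup H] [InnerProductSpace ℂ H]
  [CompleteSpace H] (L : Fin d → H →L[ℂ] H)

lemma Lword_nil : Lword L ([] : List (Fin d)) = 1 := rfl

lemma Lword_cons (j : Fin d) (σ : List (Fin d)) :
    Lword L (j :: σ) = L j * Lword L σ := by
  simp [Lword]

lemma Lword_mem (σ : List (Fin d)) :
    Lword L σ ∈ Algebra.adjoin ℂ (Set.range L) := by
  induction σ with
  | nil => simpa [Lword_nil] using one_mem (Algebra.adjoin ℂ (Set.range L))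
  | cons j σ ih =>
      rw [Lword_cons]
      exact mul_mem (Algebra.subset_adjoin ⟨j, rfl⟩) ih

lemma star_Lword_mul_cancel
    (hL : ∀ j k : Fin d, star (L j) * L k = if j = k then (1 : H →L[ℂ] H) else 0)
    (τ σ σ' : List (Fin d)) :
    star (Lword L (τ ++ σ)) * Lword L (τ ++ σ') = star (Lword L σ) * Lword L σ' := by
  induction τ with
  | nil => rfl
  | cons j τ ih =>
      have h : star (L j) * L j = 1 := by simpa using hL j j
      simp only [List.cons_append, Lword_cons, star_mul, mul_assoc]
      rw [← mul_assoc (star (L j)), h, one_mul]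
      exact ih

lemma star_Lword_mul_eq_zero
    (hL : ∀ j k : Fin d, star (L j) * L k = if j = k then (1 : H →L[ℂ] H) else 0)
    (σ τ : List (Fin d)) (h : ¬ ∃ α : List (Fin d), σ = τ ++ α ∨ τ = σ ++ α) :
    star (Lword L τ) * Lword L σ = 0 := by
  induction σ generalizing τ with
  | nil => exact absurd ⟨τ, Or.inr rfl⟩ h
  | cons j σ' ih =>
      cases τ with
      | nil => exact absurd ⟨j :: σ', Or.inl rfl⟩ h
      | cons k τ' =>
          by_cases hjk : k = j
          · subst hjk
            have h' : ¬ ∃ α : List (Fin d), σ' = τ' ++ α ∨ τ' = σ' ++ α := by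
              rintro ⟨α, hα | hα⟩
              · exact h ⟨α, Or.inl (by simp [hα])⟩
              · exact h ⟨α, Or.inr (by simp [hα])⟩
            have hk : star (L k) * L k = 1 := by simpa using hL k k
            simp only [Lword_cons, star_mul, mul_assoc]
            rw [← mul_assoc (star (L k)), hk, one_mul]
            exact ih τ' h'
          · have hk : star (L k) * L j = 0 := by simp [hL k j, hjk]
            simp only [Lword_cons, star_mul, mul_assoc]
            rw [← mul_assoc (star (L k)), hk, zero_mul, mul_zero]

lemma herm_aux {H : Type*} [NormedAddCommGroup H] [InnerProductSpace ℂ H] [CompleteSpace H]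
    (A : Subalgebra ℂ (H →L[ℂ] H)) (μ : (H →L[ℂ] H) →ₗ[ℂ] ℂ)
    (hμ : ∀ a ∈ A, 0 ≤ μ (star a * a))
    {a b : H →L[ℂ] H} (ha : a ∈ A) (hb : b ∈ A) :
    μ (star a * b) = starRingEnd ℂ (μ (star b * a)) := by
  set u := μ (star a * b) with hu
  set v := μ (star b * a) with hv
  set p := μ (star a * a) with hp
  set q := μ (star b * b) with hq
  have him : ∀ z : ℂ, 0 ≤ z → z.im = 0 := fun z hz => ((Complex.le_def.mp hz).2).symm
  have hpim : p.im = 0 := him _ (hμ a ha)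
  have hqim : q.im = 0 := him _ (hμ b hb)
  have h1 : μ (star (a + b) * (a + b)) = p + u + v + q := by
    simp only [star_add, add_mul, mul_add, map_add, hp, hq, hu, hv]
    ring
  have h2 : μ (star (a + Complex.I • b) * (a + Complex.I • b))
      = p + Complex.I * u - Complex.I * v + q := by
    simp only [star_add, star_smul, add_mul, mul_add, smul_mul_assoc, mul_smul_comm,
      map_add, map_smul, smul_eq_mul, Complex.conj_I, hp, hq, hu, hv, neg_smul, map_neg,
      neg_mul, neg_neg, Complex.star_def]
    linear_combination (-(μ (star b * b))) * Complex.I_mul_I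
  have h1im : (p + u + v + q).im = 0 := by
    rw [← h1]; exact him _ (hμ _ (add_mem ha hb))
  have h2im : (p + Complex.I * u - Complex.I * v + q).im = 0 := by
    rw [← h2]; exact him _ (hμ _ (add_mem ha (A.smul_mem hb _)))
  simp only [Complex.add_im, Complex.sub_im, Complex.mul_im, Complex.I_re, Complex.I_im,
    hpim, hqim] at h1im h2im
  apply Complex.ext <;>
    simp only [Complex.conj_re, Complex.conj_im] <;> linarith

end Aux

/-- if `μ : B(H) → ℂ` is linear and `μ(a^* a) ≥ 0` for every `a` in the unital
subalgebra generated by the row isometry `L_1, …, L_d`, then `K_μ(σ,τ) := μ((L^τ)^* L^σ)` is a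
multi-Toeplitz kernel: (i) `K_μ(τσ, τσ') = K_μ(σ, σ')`; (ii) `K_μ(σ, τ) = 0` when `σ, τ` are not
comparable; (iii) every finite principal submatrix of `K_μ` is positive semidefinite. -/
theorem Kker_isMultiToeplitz {d : ℕ} (hd : 1 ≤ d)
    {H : Type*} [NormedAddCommGroup H] [InnerProductSpace ℂ H] [CompleteSpace H]
    (L : Fin d → H →L[ℂ] H)
    (hL : ∀ j k : Fin d, star (L j) * L k = if j = k then (1 : H →L[ℂ] H) else 0)
    (μ : (H →L[ℂ] H) →ₗ[ℂ] ℂ)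
    (hμ : ∀ a ∈ Algebra.adjoin ℂ (Set.range L), 0 ≤ μ (star a * a)) :
    (∀ τ σ σ' : List (Fin d), Kker μ L (τ ++ σ) (τ ++ σ') = Kker μ L σ σ') ∧
    (∀ σ τ : List (Fin d), (¬ ∃ α : List (Fin d), σ = τ ++ α ∨ τ = σ ++ α) →
      Kker μ L σ τ = 0) ∧
    (∀ S : Finset (List (Fin d)),
      Matrix.PosSemidef (Matrix.of fun σ τ : S => Kker μ L σ.1 τ.1)) := by
  refine ⟨fun τ σ σ' => ?_, fun σ τ h => ?_, fun S => ?_⟩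
  · unfold Kker
    rw [star_Lword_mul_cancel L hL τ σ' σ]
  · unfold Kker
    have h' : ¬ ∃ α : List (Fin d), σ = τ ++ α ∨ τ = σ ++ α := h
    rw [star_Lword_mul_eq_zero L hL σ τ h', map_zero]
  · rw [Matrix.posSemidef_iff_dotProduct_mulVec]
    constructor
    · -- Hermitian
      ext σ τ
      simp only [Matrix.conjTranspose_apply, Matrix.of_apply, Kker, RCLike.star_def]
      exact (herm_aux _ μ hμ (Lword_mem L τ.1) (Lword_mem L σ.1)).symm
    · -- positivity of quadratic form
      intro x
      set a : H →L[ℂ] H :=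
        ∑ σ : S, (starRingEnd ℂ) (x σ) • Lword L σ.1 with ha_def
      have ha : a ∈ Algebra.adjoin ℂ (Set.range L) :=
        sum_mem fun σ _ => Subalgebra.smul_mem _ (Lword_mem L σ.1) _
      have key : dotProduct (star x)
          ((Matrix.of fun σ τ : S => Kker μ L σ.1 τ.1).mulVec x) = μ (star a * a) := by
        have hstar : star a = ∑ τ : S, x τ • star (Lword L τ.1) := by
          simp [ha_def, star_sum, star_smul]
        rw [hstar, ha_def, Finset.sum_mul_sum]
        simp only [smul_mul_assoc, mul_smul_comm, map_sum, map_smul, smul_eq_mul,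
          smul_smul]
        rw [Finset.sum_comm]
        simp only [dotProduct, Matrix.mulVec, Matrix.of_apply, Pi.star_apply,
          RCLike.star_def, Finset.mul_sum, Kker]
        refine Finset.sum_congr rfl fun σ _ => Finset.sum_congr rfl fun τ _ => ?_
        ring
      rw [key]
      exact hμ a ha
end

section
/- Given a Szegő system, for every σ ∈ F_d^+ one has φ^#_σ(0) = ∏_{τ ⪯ σ} d_τ^{−1}, where the (finite) product is over all words τ ∈ F_d^+ with τ ⪯ σ in the shortlex order. -/
open scoped BigOperators

/-- The shortlex (length-then-lexicographic) order on words in `F_d^+`. -/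
def ShortlexLE {d : ℕ} (σ τ : List (Fin d)) : Prop :=
  σ.length < τ.length ∨ (σ.length = τ.length ∧ (σ = τ ∨ List.Lex (· < ·) σ τ))

/-- The defect `d_σ := √(1 - |γ_σ|²)`. -/
noncomputable def defect {d : ℕ} (γ : List (Fin d) → ℂ) (σ : List (Fin d)) : ℝ :=
  Real.sqrt (1 - ‖γ σ‖ ^ 2)

/-- A Szegő system: Verblunsky coefficients `γ : F_d^+ → ℂ` with `γ_∅ = 0`, `|γ_σ| < 1`,
together with families of noncommutative polynomials `φ, φr (= φ^#)` with `φ_∅ = φ^#_∅ = 1`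
satisfying the Szegő recurrences, where `e : ℕ ≃ F_d^+` is the shortlex order isomorphism and
`τ - 1 := e (e⁻¹ τ - 1)` is the immediate shortlex predecessor. -/
structure SzegoSystem (d : ℕ) where
  /-- the shortlex enumeration of `F_d^+` -/
  e : ℕ ≃ List (Fin d)
  /-- `e` is an order isomorphism onto the shortlex order -/
  he : ∀ m n : ℕ, m ≤ n ↔ ShortlexLE (e m) (e n)
  /-- the Verblunsky coefficients -/
  γ : List (Fin d) → ℂ
  hγ0 : γ [] = 0
  hγlt : ∀ σ : List (Fin d), ‖γ σ‖ < 1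
  /-- the orthonormal polynomials -/
  φ : List (Fin d) → FreeAlgebra ℂ (Fin d)
  /-- the reverse polynomials `φ^#` -/
  φr : List (Fin d) → FreeAlgebra ℂ (Fin d)
  hφ0 : φ [] = 1
  hφr0 : φr [] = 1
  recφ : ∀ (k : Fin d) (σ : List (Fin d)),
    φ (k :: σ) = (((defect γ (k :: σ) : ℝ) : ℂ))⁻¹ •
      (FreeAlgebra.ι ℂ k * φ σ - γ (k :: σ) • φr (e (e.symm (k :: σ) - 1)))
  recφr : ∀ (k : Fin d) (σ : List (Fin d)),
    φr (k :: σ) = (((defect γ (k :: σ) : ℝ) : ℂ))⁻¹ •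
      ((-(starRingEnd ℂ (γ (k :: σ)))) • (FreeAlgebra.ι ℂ k * φ σ) +
        φr (e (e.symm (k :: σ) - 1)))

/-- Evaluation of a noncommutative polynomial at `0` (the constant coefficient). -/
noncomputable def evalZero (d : ℕ) : FreeAlgebra ℂ (Fin d) →ₐ[ℂ] ℂ :=
  FreeAlgebra.lift ℂ (fun _ : Fin d => (0 : ℂ))

/-- The shortlex-largest word of length `n`: the largest generator repeated `n` times. -/
def sigmaWord (d : ℕ) (hd : 1 ≤ d) (n : ℕ) : List (Fin d) :=
  List.replicate n (⟨d - 1, by omega⟩ : Fin d)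

/-- for every `σ ∈ F_d^+`, `φ^#_σ(0) = ∏_{τ ⪯ σ} d_τ⁻¹`, the product over all
words `τ ⪯ σ` in the shortlex order (enumerated by `e`). -/
theorem reverse_poly_at_zero {d : ℕ} (hd : 1 ≤ d) (S : SzegoSystem d) (σ : List (Fin d)) :
    evalZero d (S.φr σ) =
      ∏ j ∈ Finset.range (S.e.symm σ + 1), (((defect S.γ (S.e j) : ℝ) : ℂ))⁻¹ := by
  have hsymm0 : S.e.symm [] = 0 := by
    have h : S.e.symm [] ≤ 0 := by
      rw [S.he, Equiv.apply_symm_apply]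
      rcases List.eq_nil_or_concat (S.e 0) with h0 | ⟨l, a, h0⟩
      · exact Or.inr ⟨by rw [h0], Or.inl (by rw [h0])⟩
      · exact Or.inl (by rw [h0]; simp)
    omega
  have he0 : S.e 0 = [] := by rw [← hsymm0, Equiv.apply_symm_apply]
  have key : ∀ n : ℕ, evalZero d (S.φr (S.e n)) =
      ∏ j ∈ Finset.range (n + 1), (((defect S.γ (S.e j) : ℝ) : ℂ))⁻¹ := by
    intro n
    induction n using Nat.strong_induction_on with
    | _ n ih =>
      cases hn : S.e n with
      | nil =>
        have hn0 : n = 0 := by rw [← hsymm0, ← hn, Equiv.symm_apply_apply]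
        subst hn0
        rw [S.hφr0, map_one, Finset.prod_range_one, he0]
        simp [defect, S.hγ0]
      | cons k l =>
        have hnpos : n ≠ 0 := by
          intro h; rw [h, he0] at hn; simp at hn
        rw [S.recφr k l, map_smul, map_add, map_smul, map_mul]
        have hι : evalZero d (FreeAlgebra.ι ℂ k) = 0 := by
          simp [evalZero]
        rw [hι, zero_mul, smul_zero, zero_add]
        rw [← hn, Equiv.symm_apply_apply]
        have hpred := ih (n - 1) (by omega)
        rw [hpred]
        rw [show n - 1 + 1 = n from by omega, hn]
        rw [Finset.prod_range_succ, smul_eq_mul, mul_comm, hn]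
  calc evalZero d (S.φr σ) = evalZero d (S.φr (S.e (S.e.symm σ))) := by
        rw [Equiv.apply_symm_apply]
    _ = _ := key _
end

section
/- Given a Szegő system, for every nonempty word σ ∈ F_d^+ one has φ_σ(0) = −γ_σ ∏_{τ ⪯ σ} d_τ^{−1}, where the (finite) product is over all words τ ∈ F_d^+ with τ ⪯ σ in the shortlex order. -/
open scoped BigOperators

lemma shortlex_nil_le {d : ℕ} (τ : List (Fin d)) : ShortlexLE ([] : List (Fin d)) τ := by
  cases τ with
  | nil => exact Or.inr ⟨rfl, Or.inl rfl⟩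
  | cons a l => exact Or.inl (by simp)

lemma e_symm_nil {d : ℕ} (S : SzegoSystem d) : S.e.symm [] = 0 := by
  have h : ShortlexLE (S.e (S.e.symm [])) (S.e 0) := by
    rw [Equiv.apply_symm_apply]; exact shortlex_nil_le _
  have := (S.he _ 0).mpr h
  omega

lemma evalZero_ι {d : ℕ} (k : Fin d) : evalZero d (FreeAlgebra.ι ℂ k) = 0 := by
  simp [evalZero]

lemma e_ne_nil {d : ℕ} (S : SzegoSystem d) (n : ℕ) (hn : n ≠ 0) : S.e n ≠ [] := by
  intro h
  have : S.e.symm (S.e n) = 0 := by rw [h, e_symm_nil]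
  simp at this; exact hn this

lemma evalZero_φr {d : ℕ} (S : SzegoSystem d) (n : ℕ) :
    evalZero d (S.φr (S.e n)) =
      ∏ j ∈ Finset.range (n + 1), (((defect S.γ (S.e j) : ℝ) : ℂ))⁻¹ := by
  induction n with
  | zero =>
    have h0 : S.e 0 = [] := by
      have := e_symm_nil S
      rw [← this, Equiv.apply_symm_apply]
    rw [h0, S.hφr0]
    simp [h0, defect, S.hγ0]
  | succ n ih =>
    obtain ⟨k, τ, hkτ⟩ : ∃ k τ, S.e (n+1) = k :: τ := by
      cases h : S.e (n+1) with
      | nil => exact absurd h (e_ne_nil S _ (by omega))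
      | cons k τ => exact ⟨k, τ, rfl⟩
    have hsymm : S.e.symm (k :: τ) = n + 1 := by rw [← hkτ]; simp
    rw [hkτ, S.recφr k τ, hsymm]
    simp only [Nat.add_sub_cancel]
    rw [map_smul, map_add, map_smul, map_mul, evalZero_ι, zero_mul, smul_zero, zero_add, ih,
      Finset.prod_range_succ (n := n + 1), ← hkτ, smul_eq_mul, mul_comm]

/-- for every nonempty word `σ ∈ F_d^+`,
`φ_σ(0) = −γ_σ ∏_{τ ⪯ σ} d_τ⁻¹`, the product over all words `τ ⪯ σ` in the shortlex order
(enumerated by `e`). -/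
theorem orthonormal_poly_at_zero {d : ℕ} (hd : 1 ≤ d) (S : SzegoSystem d)
    (σ : List (Fin d)) (hσ : σ ≠ []) :
    evalZero d (S.φ σ) =
      -S.γ σ * ∏ j ∈ Finset.range (S.e.symm σ + 1), (((defect S.γ (S.e j) : ℝ) : ℂ))⁻¹ := by
  obtain ⟨k, τ, rfl⟩ : ∃ k τ, σ = k :: τ := by
    cases σ with
    | nil => exact absurd rfl hσ
    | cons k τ => exact ⟨k, τ, rfl⟩
  have hkτ : S.e (S.e.symm (k :: τ)) = k :: τ := by simp
  have hn0 : S.e.symm (k :: τ) ≠ 0 := by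
    intro h
    have h0 : S.e 0 = [] := by
      have := e_symm_nil S
      rw [← this, Equiv.apply_symm_apply]
    rw [h, h0] at hkτ; exact List.cons_ne_nil _ _ hkτ.symm
  obtain ⟨m, hm⟩ : ∃ m, S.e.symm (k :: τ) = m + 1 := ⟨S.e.symm (k :: τ) - 1, by omega⟩
  rw [S.recφ k τ, map_smul, map_sub, map_mul, evalZero_ι, zero_mul, zero_sub, map_smul,
    smul_eq_mul, smul_eq_mul, hm, Nat.add_sub_cancel, evalZero_φr S m,
    Finset.prod_range_succ (n := m + 1), ← hm, hkτ]
  ring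
end

section
/- Given a Szegő system, for every σ ∈ F_d^+ one has ∑_{τ ⪯ σ} |φ_τ(0)|² = ∏_{τ ⪯ σ} (1 − |γ_τ|²)^{−1}, where the (finite) sum and product are over all words τ ∈ F_d^+ with τ ⪯ σ in the shortlex order. -/
open scoped BigOperators

lemma SzegoSystem.e_zero {d : ℕ} (S : SzegoSystem d) : S.e 0 = [] := by
  have h : ShortlexLE (S.e (S.e.symm [])) (S.e 0) := by
    rw [Equiv.apply_symm_apply]
    cases h : S.e 0 with
    | nil => exact Or.inr ⟨rfl, Or.inl rfl⟩
    | cons a l => exact Or.inl (by simp)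
  have h2 : S.e.symm [] = 0 := Nat.le_zero.mp ((S.he _ 0).2 h)
  rw [← h2, Equiv.apply_symm_apply]

lemma SzegoSystem.one_sub_pos {d : ℕ} (S : SzegoSystem d) (τ : List (Fin d)) :
    0 < 1 - ‖S.γ τ‖ ^ 2 := by
  nlinarith [S.hγlt τ, norm_nonneg (S.γ τ)]

lemma SzegoSystem.defect_sq {d : ℕ} (S : SzegoSystem d) (τ : List (Fin d)) :
    defect S.γ τ ^ 2 = 1 - ‖S.γ τ‖ ^ 2 :=
  Real.sq_sqrt (le_of_lt (S.one_sub_pos τ))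

lemma SzegoSystem.defect_pos {d : ℕ} (S : SzegoSystem d) (τ : List (Fin d)) :
    0 < defect S.γ τ := Real.sqrt_pos.2 (S.one_sub_pos τ)

lemma SzegoSystem.phir_abs {d : ℕ} (S : SzegoSystem d) (n : ℕ) :
    ‖evalZero d (S.φr (S.e n))‖ ^ 2 =
      ∏ j ∈ Finset.range (n + 1), (1 - ‖S.γ (S.e j)‖ ^ 2)⁻¹ := by
  induction n with
  | zero => simp [S.e_zero, S.hφr0, S.hγ0]
  | succ n ih =>
    cases hcons : S.e (n + 1) with
    | nil => exact absurd (S.e.injective (hcons.trans S.e_zero.symm)) (by simp)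
    | cons k σ' =>
      have hsymm : S.e.symm (k :: σ') = n + 1 := by
        rw [← hcons, Equiv.symm_apply_apply]
      have hrec := S.recφr k σ'
      rw [hsymm, Nat.add_sub_cancel] at hrec
      rw [hrec]
      have heval : evalZero d ((((defect S.γ (k :: σ') : ℝ) : ℂ))⁻¹ •
          ((-(starRingEnd ℂ (S.γ (k :: σ')))) • (FreeAlgebra.ι ℂ k * S.φ σ') +
            S.φr (S.e n))) =
          (((defect S.γ (k :: σ') : ℝ) : ℂ))⁻¹ * evalZero d (S.φr (S.e n)) := by
        simp [map_smul, map_add, map_mul, evalZero_ι, smul_eq_mul]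
      rw [heval, norm_mul, norm_inv, mul_pow, inv_pow, Complex.norm_real, Real.norm_eq_abs,
        abs_of_pos (S.defect_pos (k :: σ')), S.defect_sq, ih]
      conv_rhs => rw [Finset.prod_range_succ]
      rw [hcons]
      ring

/-- for every `σ ∈ F_d^+`,
`∑_{τ ⪯ σ} |φ_τ(0)|² = ∏_{τ ⪯ σ} (1 − |γ_τ|²)⁻¹`, the sum and product being over all words
`τ ⪯ σ` in the shortlex order (enumerated by `e`). -/
theorem sum_sq_at_zero_eq_prod {d : ℕ} (hd : 1 ≤ d) (S : SzegoSystem d) (σ : List (Fin d)) :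
    ∑ j ∈ Finset.range (S.e.symm σ + 1), ‖evalZero d (S.φ (S.e j))‖ ^ 2 =
      ∏ j ∈ Finset.range (S.e.symm σ + 1), (1 - ‖S.γ (S.e j)‖ ^ 2)⁻¹ := by
  suffices h : ∀ n : ℕ,
      ∑ j ∈ Finset.range (n + 1), ‖evalZero d (S.φ (S.e j))‖ ^ 2 =
        ∏ j ∈ Finset.range (n + 1), (1 - ‖S.γ (S.e j)‖ ^ 2)⁻¹ from h _
  intro n
  induction n with
  | zero => simp [S.e_zero, S.hφ0, S.hγ0]
  | succ n ih =>
    cases hcons : S.e (n + 1) with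
    | nil => exact absurd (S.e.injective (hcons.trans S.e_zero.symm)) (by simp)
    | cons k σ' =>
      have hsymm : S.e.symm (k :: σ') = n + 1 := by
        rw [← hcons, Equiv.symm_apply_apply]
      have hrec := S.recφ k σ'
      rw [hsymm, Nat.add_sub_cancel] at hrec
      have heval : evalZero d (S.φ (S.e (n + 1))) =
          (((defect S.γ (k :: σ') : ℝ) : ℂ))⁻¹ *
            (-(S.γ (k :: σ') * evalZero d (S.φr (S.e n)))) := by
        rw [hcons, hrec]
        simp [map_smul, map_sub, map_mul, evalZero_ι, smul_eq_mul]
      have habs : ‖evalZero d (S.φ (S.e (n + 1)))‖ ^ 2 =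
          (1 - ‖S.γ (S.e (n + 1))‖ ^ 2)⁻¹ *
            (‖S.γ (S.e (n + 1))‖ ^ 2 *
              ‖evalZero d (S.φr (S.e n))‖ ^ 2) := by
        rw [heval, norm_mul, norm_inv, Complex.norm_real, Real.norm_eq_abs,
          abs_of_pos (S.defect_pos (k :: σ')), norm_neg, norm_mul, ← hcons]
        have := S.defect_sq (S.e (n + 1))
        rw [hcons] at this ⊢
        rw [mul_pow, mul_pow, inv_pow, this]
      rw [Finset.sum_range_succ, Finset.prod_range_succ, ih, habs, S.phir_abs]
      have hne : 1 - ‖S.γ (S.e (n + 1))‖ ^ 2 ≠ 0 :=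
        ne_of_gt (S.one_sub_pos _)
      have hA : (∏ j ∈ Finset.range (n + 1), (1 - ‖S.γ (S.e j)‖ ^ 2)) ≠ 0 :=
        Finset.prod_ne_zero_iff.mpr fun j _ => ne_of_gt (S.one_sub_pos _)
      field_simp
      ring
end

section
/- Given a Szegő system, the sequences n ↦ |φ^#_{σ(n)}(0)|^{−2} and n ↦ (∑_{τ ⪯ σ(n)} |φ_τ(0)|²)^{−1} both converge, as n → ∞, to the unconditional infinite product ∏_{σ ∈ F_d^+} (1 − |γ_σ|²) (the limit of the net of products over finite subsets of F_d^+, which exists since every factor lies in (0,1]; this limit equals 0 when the product diverges). -/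
open scoped BigOperators

namespace SzegoAux

variable {d : ℕ} (S : SzegoSystem d)

/-- the factor of the infinite product, along the enumeration -/
noncomputable def g (j : ℕ) : ℝ := 1 - ‖S.γ (S.e j)‖ ^ 2

lemma g_pos (j : ℕ) : 0 < g S j := by
  have h := S.hγlt (S.e j)
  have h0 : (0:ℝ) ≤ ‖S.γ (S.e j)‖ := norm_nonneg _
  unfold g; nlinarith

lemma g_le_one (j : ℕ) : g S j ≤ 1 := by
  have h0 : (0:ℝ) ≤ ‖S.γ (S.e j)‖ := norm_nonneg _
  unfold g; nlinarith

lemma defect_sq (σ : List (Fin d)) : defect S.γ σ ^ 2 = 1 - ‖S.γ σ‖ ^ 2 := by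
  have h := S.hγlt σ
  have h0 : (0:ℝ) ≤ ‖S.γ σ‖ := norm_nonneg _
  exact Real.sq_sqrt (by nlinarith)

lemma defect_nonneg (σ : List (Fin d)) : 0 ≤ defect S.γ σ := Real.sqrt_nonneg _

lemma e_zero : S.e 0 = [] := by
  have h := (S.he 0 (S.e.symm [])).mp (Nat.zero_le _)
  rw [S.e.apply_symm_apply] at h
  rcases h with h | ⟨h, _⟩
  · simp at h
  · exact List.length_eq_zero_iff.mp (by simpa using h)

lemma evalZero_ι (k : Fin d) : evalZero d (FreeAlgebra.ι ℂ k) = 0 := by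
  simp [evalZero]

/-- one step of the recurrence at the level of constant coefficients -/
lemma evalZero_φr_succ (n : ℕ) :
    evalZero d (S.φr (S.e (n + 1))) =
      ((defect S.γ (S.e (n+1)) : ℝ) : ℂ)⁻¹ * evalZero d (S.φr (S.e n)) := by
  obtain ⟨k, σ, hkσ⟩ : ∃ k σ, S.e (n+1) = k :: σ := by
    rcases h : S.e (n+1) with _ | ⟨k, σ⟩
    · exfalso
      have : S.e (n+1) = S.e 0 := by rw [h, e_zero]
      exact Nat.succ_ne_zero n (S.e.injective this)
    · exact ⟨k, σ, rfl⟩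
  have hsymm : S.e.symm (k :: σ) = n + 1 := by rw [← hkσ]; exact S.e.symm_apply_apply _
  rw [hkσ, S.recφr k σ, hsymm]
  simp only [Nat.add_sub_cancel, map_smul, map_add, map_mul, evalZero_ι, zero_mul,
    mul_zero, smul_zero, zero_add, smul_eq_mul, ← hkσ]

lemma evalZero_φ_succ (n : ℕ) :
    evalZero d (S.φ (S.e (n + 1))) =
      ((defect S.γ (S.e (n+1)) : ℝ) : ℂ)⁻¹ * (-(S.γ (S.e (n+1))) * evalZero d (S.φr (S.e n))) := by
  obtain ⟨k, σ, hkσ⟩ : ∃ k σ, S.e (n+1) = k :: σ := by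
    rcases h : S.e (n+1) with _ | ⟨k, σ⟩
    · exfalso
      have : S.e (n+1) = S.e 0 := by rw [h, e_zero]
      exact Nat.succ_ne_zero n (S.e.injective this)
    · exact ⟨k, σ, rfl⟩
  have hsymm : S.e.symm (k :: σ) = n + 1 := by rw [← hkσ]; exact S.e.symm_apply_apply _
  rw [hkσ, S.recφ k σ, hsymm]
  simp only [Nat.add_sub_cancel, map_smul, map_sub, map_mul, evalZero_ι, zero_mul,
    smul_eq_mul, ← hkσ]
  ring

/-- partial product -/
noncomputable def P (n : ℕ) : ℝ := ∏ j ∈ Finset.range (n + 1), g S j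

lemma P_pos (n : ℕ) : 0 < P S n := Finset.prod_pos fun j _ => g_pos S j

lemma key_φr (n : ℕ) : ‖evalZero d (S.φr (S.e n))‖ ^ 2 * P S n = 1 := by
  induction n with
  | zero =>
      rw [e_zero, S.hφr0]
      simp [P, g, e_zero, S.hγ0]
  | succ n ih =>
      have hd2 : defect S.γ (S.e (n+1)) ^ 2 = g S (n+1) := defect_sq S _
      have hgpos := g_pos S (n+1)
      have habs : ‖evalZero d (S.φr (S.e (n+1)))‖ ^ 2 =
          (g S (n+1))⁻¹ * ‖evalZero d (S.φr (S.e n))‖ ^ 2 := by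
        rw [evalZero_φr_succ, norm_mul, norm_inv, Complex.norm_real, Real.norm_eq_abs,
          abs_of_nonneg (defect_nonneg S _), mul_pow, inv_pow, hd2]
      have hP : P S (n+1) = P S n * g S (n+1) := by
        simp [P, Finset.prod_range_succ]
      rw [habs, hP]
      field_simp
      nlinarith [ih]

lemma key_φ (n : ℕ) :
    (∑ j ∈ Finset.range (n + 1), ‖evalZero d (S.φ (S.e j))‖ ^ 2) * P S n = 1 := by
  induction n with
  | zero =>
      rw [Finset.sum_range_one, e_zero, S.hφ0]
      simp [P, g, e_zero, S.hγ0]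
  | succ n ih =>
      have hd2 : defect S.γ (S.e (n+1)) ^ 2 = g S (n+1) := defect_sq S _
      have hgpos := g_pos S (n+1)
      have hPpos := P_pos S n
      have habs : ‖evalZero d (S.φ (S.e (n+1)))‖ ^ 2 =
          (g S (n+1))⁻¹ * (‖S.γ (S.e (n+1))‖ ^ 2 *
            ‖evalZero d (S.φr (S.e n))‖ ^ 2) := by
        rw [evalZero_φ_succ, norm_mul, norm_mul, norm_inv, Complex.norm_real, Real.norm_eq_abs, norm_neg,
          abs_of_nonneg (defect_nonneg S _), mul_pow, mul_pow, inv_pow, hd2]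
      have hφr := key_φr S n
      have hγg : ‖S.γ (S.e (n+1))‖ ^ 2 = 1 - g S (n+1) := by
        simp [g]
      have hP : P S (n+1) = P S n * g S (n+1) := by
        simp [P, Finset.prod_range_succ]
      have hB : ‖evalZero d (S.φr (S.e n))‖ ^ 2 = (P S n)⁻¹ := by
        field_simp at hφr ⊢
        linarith [hφr]
      have hSum : (∑ j ∈ Finset.range (n + 1), ‖evalZero d (S.φ (S.e j))‖ ^ 2)
          = (P S n)⁻¹ := by
        field_simp at ih ⊢
        linarith [ih]
      rw [Finset.sum_range_succ, habs, hP, hγg, hB, hSum]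
      field_simp
      ring

end SzegoAux

namespace SzegoAux2
open SzegoAux Filter

variable {d : ℕ} (S : SzegoSystem d)

lemma f_pos (σ : List (Fin d)) : 0 < 1 - ‖S.γ σ‖ ^ 2 := by
  have h := S.hγlt σ
  have h0 : (0:ℝ) ≤ ‖S.γ σ‖ := norm_nonneg _
  nlinarith

lemma f_le_one (σ : List (Fin d)) : 1 - ‖S.γ σ‖ ^ 2 ≤ 1 := by
  have h0 : (0:ℝ) ≤ ‖S.γ σ‖ := norm_nonneg _
  nlinarith

lemma hasProd_aux :
    HasProd (fun σ : List (Fin d) => 1 - ‖S.γ σ‖ ^ 2)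
      (⨅ s : Finset (List (Fin d)), ∏ σ ∈ s, (1 - ‖S.γ σ‖ ^ 2)) := by
  apply tendsto_atTop_ciInf
  · intro s t hst
    dsimp only
    rw [← Finset.prod_sdiff hst]
    refine mul_le_of_le_one_left (Finset.prod_nonneg fun σ _ => (f_pos S σ).le) ?_
    exact Finset.prod_le_one (fun σ _ => (f_pos S σ).le) (fun σ _ => f_le_one S σ)
  · refine ⟨0, ?_⟩
    rintro x ⟨s, rfl⟩
    exact Finset.prod_nonneg fun σ _ => (f_pos S σ).le

lemma hasProd_tprod :
    HasProd (fun σ : List (Fin d) => 1 - ‖S.γ σ‖ ^ 2)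
      (∏' σ : List (Fin d), (1 - ‖S.γ σ‖ ^ 2)) := by
  have hm : Multipliable (fun σ : List (Fin d) => 1 - ‖S.γ σ‖ ^ 2) :=
    ⟨_, hasProd_aux S⟩
  exact hm.hasProd

lemma tendsto_prod_g :
    Tendsto (fun N : ℕ => ∏ j ∈ Finset.range N, g S j) atTop
      (nhds (∏' σ : List (Fin d), (1 - ‖S.γ σ‖ ^ 2))) := by
  have hg : HasProd ((fun σ : List (Fin d) => 1 - ‖S.γ σ‖ ^ 2) ∘ S.e)
      (∏' σ : List (Fin d), (1 - ‖S.γ σ‖ ^ 2)) :=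
    (Equiv.hasProd_iff S.e).mpr (hasProd_tprod S)
  have hcongr : (fun j : ℕ => g S j) = ((fun σ : List (Fin d) => 1 - ‖S.γ σ‖ ^ 2) ∘ S.e) := rfl
  rw [show (fun N : ℕ => ∏ j ∈ Finset.range N, g S j)
      = (fun N : ℕ => ∏ j ∈ Finset.range N,
          ((fun σ : List (Fin d) => 1 - ‖S.γ σ‖ ^ 2) ∘ S.e) j) from by rw [hcongr]]
  exact hg.tendsto_prod_nat

lemma le_sigma (hd : 1 ≤ d) (σ : List (Fin d)) :
    σ = sigmaWord d hd σ.length ∨ List.Lex (· < ·) σ (sigmaWord d hd σ.length) := by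
  induction σ with
  | nil => left; rfl
  | cons a σ ih =>
    have hle : a ≤ (⟨d - 1, by omega⟩ : Fin d) := by
      have := a.isLt
      rw [Fin.le_def]
      simp
      omega
    have hrep : sigmaWord d hd (a :: σ).length
        = (⟨d - 1, by omega⟩ : Fin d) :: sigmaWord d hd σ.length := by
      simp [sigmaWord, List.replicate_succ]
    rcases lt_or_eq_of_le hle with h | h
    · right; rw [hrep]; exact List.Lex.rel h
    · rcases ih with h2 | h2
      · left; rw [hrep, ← h, ← h2]
      · right; rw [hrep, ← h]; exact List.Lex.cons h2

lemma shortlex_sigma (hd : 1 ≤ d) (σ : List (Fin d)) {n : ℕ} (hn : σ.length ≤ n) :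
    ShortlexLE σ (sigmaWord d hd n) := by
  have hlen : (sigmaWord d hd n).length = n := List.length_replicate
  rcases lt_or_eq_of_le hn with h | h
  · left; omega
  · right
    refine ⟨by omega, ?_⟩
    rw [← h]
    exact le_sigma hd σ

lemma tendsto_msub (hd : 1 ≤ d) :
    Tendsto (fun n : ℕ => S.e.symm (sigmaWord d hd n) + 1) atTop atTop := by
  rw [tendsto_atTop]
  intro b
  rw [eventually_atTop]
  refine ⟨(S.e b).length, fun n hn => ?_⟩
  have : b ≤ S.e.symm (sigmaWord d hd n) := by
    rw [S.he b (S.e.symm (sigmaWord d hd n)), S.e.apply_symm_apply]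
    exact shortlex_sigma hd _ hn
  omega

end SzegoAux2

/-- the sequences `n ↦ |φ^#_{σ(n)}(0)|⁻²` and
`n ↦ (∑_{τ ⪯ σ(n)} |φ_τ(0)|²)⁻¹` both converge, as `n → ∞`, to the unconditional infinite
product `∏_{σ ∈ F_d^+} (1 − |γ_σ|²)` (the limit of the net of finite partial products, which
exists; it is `0` when the product diverges). -/
theorem tendsto_to_infinite_product {d : ℕ} (hd : 1 ≤ d) (S : SzegoSystem d) :
    HasProd (fun σ : List (Fin d) => 1 - ‖S.γ σ‖ ^ 2)
      (∏' σ : List (Fin d), (1 - ‖S.γ σ‖ ^ 2)) ∧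
    Filter.Tendsto
      (fun n : ℕ => (‖evalZero d (S.φr (sigmaWord d hd n))‖ ^ 2)⁻¹)
      Filter.atTop
      (nhds (∏' σ : List (Fin d), (1 - ‖S.γ σ‖ ^ 2))) ∧
    Filter.Tendsto
      (fun n : ℕ =>
        (∑ j ∈ Finset.range (S.e.symm (sigmaWord d hd n) + 1),
          ‖evalZero d (S.φ (S.e j))‖ ^ 2)⁻¹)
      Filter.atTop
      (nhds (∏' σ : List (Fin d), (1 - ‖S.γ σ‖ ^ 2))) := by
  have hT := (SzegoAux2.tendsto_prod_g S).comp (SzegoAux2.tendsto_msub S hd)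
  refine ⟨SzegoAux2.hasProd_tprod S, ?_, ?_⟩
  · refine hT.congr fun n => ?_
    show (∏ j ∈ Finset.range (S.e.symm (sigmaWord d hd n) + 1), SzegoAux.g S j)
        = (‖evalZero d (S.φr (sigmaWord d hd n))‖ ^ 2)⁻¹
    have hk := SzegoAux.key_φr S (S.e.symm (sigmaWord d hd n))
    rw [S.e.apply_symm_apply] at hk
    rw [eq_inv_of_mul_eq_one_left hk, inv_inv]
    rfl
  · refine hT.congr fun n => ?_
    show (∏ j ∈ Finset.range (S.e.symm (sigmaWord d hd n) + 1), SzegoAux.g S j)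
        = (∑ j ∈ Finset.range (S.e.symm (sigmaWord d hd n) + 1),
            ‖evalZero d (S.φ (S.e j))‖ ^ 2)⁻¹
    have hk := SzegoAux.key_φ S (S.e.symm (sigmaWord d hd n))
    rw [eq_inv_of_mul_eq_one_left hk, inv_inv]
    rfl
end

section
/- Given a Szegő system, fix m ≥ 1 and d-tuples Z = (Z_1,…,Z_d) and W = (W_1,…,W_d) of m×m complex matrices. Then for every generator k ∈ {1,…,d} and every word σ ∈ F_d^+: φ^#_{kσ}(Z)^* φ^#_{kσ}(W) − φ_{kσ}(Z)^* φ_{kσ}(W) = φ^#_{kσ−1}(Z)^* φ^#_{kσ−1}(W) − φ_σ(Z)^* Z_k^* W_k φ_σ(W). -/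
open scoped BigOperators ComplexOrder

/-- Evaluation of a noncommutative polynomial at a `d`-tuple of `m×m` matrices. -/
noncomputable def evalM {d m : ℕ} (A : Fin d → Matrix (Fin m) (Fin m) ℂ) :
    FreeAlgebra ℂ (Fin d) →ₐ[ℂ] Matrix (Fin m) (Fin m) ℂ :=
  FreeAlgebra.lift ℂ A

private lemma szego_key {M : Type*} [Ring M] [Algebra ℂ M] [StarRing M] [StarModule ℂ M]
    (c a : ℂ) (hc : (starRingEnd ℂ) c = c)
    (hkey : c ^ 2 * (1 - (starRingEnd ℂ) a * a) = 1) (Xz Xw Rz Rw : M) :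
    star (c • ((-(starRingEnd ℂ) a) • Xz + Rz)) * (c • ((-(starRingEnd ℂ) a) • Xw + Rw)) -
      star (c • (Xz - a • Rz)) * (c • (Xw - a • Rw)) = star Rz * Rw - star Xz * Xw := by
  simp only [star_smul, star_add, star_sub, star_neg, smul_mul_assoc, mul_smul_comm,
    add_mul, mul_add, sub_mul, mul_sub, neg_smul, smul_smul, neg_mul, mul_neg, neg_neg, smul_neg]
  match_scalars <;>
    · simp only [← starRingEnd_apply, starRingEnd_self_apply, hc]
      first
      | linear_combination hkey
      | linear_combination -hkey
      | ring

/-- for any `d`-tuples `Z, W` of `m×m` matrices, any generator `k` and word `σ`,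
`φ^#_{kσ}(Z)^* φ^#_{kσ}(W) − φ_{kσ}(Z)^* φ_{kσ}(W)
  = φ^#_{kσ−1}(Z)^* φ^#_{kσ−1}(W) − φ_σ(Z)^* Z_k^* W_k φ_σ(W)`. -/
theorem szego_cd_step {d m : ℕ} (hd : 1 ≤ d) (hm : 1 ≤ m) (S : SzegoSystem d)
    (Z W : Fin d → Matrix (Fin m) (Fin m) ℂ) (k : Fin d) (σ : List (Fin d)) :
    star (evalM Z (S.φr (k :: σ))) * evalM W (S.φr (k :: σ)) -
        star (evalM Z (S.φ (k :: σ))) * evalM W (S.φ (k :: σ)) =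
      star (evalM Z (S.φr (S.e (S.e.symm (k :: σ) - 1)))) *
          evalM W (S.φr (S.e (S.e.symm (k :: σ) - 1))) -
        star (evalM Z (S.φ σ)) * (star (Z k) * W k) * evalM W (S.φ σ) := by
  set γ := S.γ
  have h1 : ‖γ (k :: σ)‖ ^ 2 < 1 := by
    have := S.hγlt (k :: σ)
    nlinarith [norm_nonneg (γ (k :: σ))]
  have hdpos : (0:ℝ) < defect γ (k :: σ) := Real.sqrt_pos.2 (by linarith)
  have hdsq : (defect γ (k :: σ)) ^ 2 = 1 - ‖γ (k :: σ)‖ ^ 2 :=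
    Real.sq_sqrt (by linarith)
  have hc : (starRingEnd ℂ) ((((defect γ (k :: σ) : ℝ) : ℂ))⁻¹) =
      (((defect γ (k :: σ) : ℝ) : ℂ))⁻¹ := by
    simp [Complex.conj_ofReal]
  have hkey : ((((defect γ (k :: σ) : ℝ) : ℂ))⁻¹) ^ 2 *
      (1 - (starRingEnd ℂ) (γ (k :: σ)) * γ (k :: σ)) = 1 := by
    have hmc : (starRingEnd ℂ) (γ (k :: σ)) * γ (k :: σ) =
        ((‖γ (k :: σ)‖ ^ 2 : ℝ) : ℂ) := by
      rw [mul_comm, Complex.mul_conj']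
      simp [← Complex.sq_norm, Complex.normSq_eq_norm_sq]
    rw [hmc]
    have hne : ((((defect γ (k :: σ)) : ℝ) : ℂ)) ≠ 0 := by
      exact_mod_cast hdpos.ne'
    field_simp
    rw [show ((defect γ (k :: σ) : ℝ) : ℂ) ^ 2 = ((defect γ (k :: σ) ^ 2 : ℝ) : ℂ) by
      push_cast; ring, hdsq]
    push_cast; ring
  rw [S.recφ k σ, S.recφr k σ]
  simp only [map_smul, map_add, map_sub, map_mul, map_neg]
  rw [szego_key _ _ hc hkey]
  congr 1
  have hZ : evalM Z (FreeAlgebra.ι ℂ k) = Z k := FreeAlgebra.lift_ι_apply _ _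
  have hW : evalM W (FreeAlgebra.ι ℂ k) = W k := FreeAlgebra.lift_ι_apply _ _
  rw [hZ, hW, star_mul]
  noncomm_ring
end

section
/- Given a Szegő system, fix m ≥ 1, d-tuples Z = (Z_1,…,Z_d) and W = (W_1,…,W_d) of m×m complex matrices, and n ∈ ℕ. Then the summation formula holds: φ^#_{σ(n)}(Z)^* φ^#_{σ(n)}(W) − ∑_{σ : |σ| ≤ n} φ_σ(Z)^* φ_σ(W) = − ∑_{k=1}^d ∑_{σ : |σ| ≤ n−1} φ_σ(Z)^* Z_k^* W_k φ_σ(W), where the sums are over all words of the indicated lengths (the right-hand side is empty when n = 0). -/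
open scoped BigOperators ComplexOrder

section Aux

lemma key_mat {m : ℕ} (c g : ℂ) (h : c * c * (1 - g * star g) = 1)
    (A' B' SA SB : Matrix (Fin m) (Fin m) ℂ) :
    (c • (SA - star g • SB)) * (c • (A' - g • B')) -
      (c • ((-g) • SA + SB)) * (c • ((-(star g)) • A' + B')) =
    SA * A' - SB * B' := by
  simp only [smul_mul_assoc, mul_smul_comm, smul_smul, sub_mul, mul_sub, add_mul, mul_add,
    smul_sub, smul_add, neg_smul, smul_neg, neg_neg, neg_sub, sub_neg_eq_add, neg_mul, mul_neg]
  match_scalars <;>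
    first
      | linear_combination h
      | linear_combination -h
      | ring

lemma szego_step {d m : ℕ} (S : SzegoSystem d) (Z W : Fin d → Matrix (Fin m) (Fin m) ℂ)
    (k : Fin d) (σ : List (Fin d)) :
    star (evalM Z (S.φ (k :: σ))) * evalM W (S.φ (k :: σ)) -
      star (evalM Z (S.φr (k :: σ))) * evalM W (S.φr (k :: σ)) =
    star (evalM Z (S.φ σ)) * (star (Z k) * W k) * evalM W (S.φ σ) -
      star (evalM Z (S.φr (S.e (S.e.symm (k :: σ) - 1)))) *
        evalM W (S.φr (S.e (S.e.symm (k :: σ) - 1))) := by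
  have hι : ∀ (A : Fin d → Matrix (Fin m) (Fin m) ℂ) (j : Fin d),
      evalM A (FreeAlgebra.ι ℂ j) = A j := fun A j => FreeAlgebra.lift_ι_apply ..
  set g := S.γ (k :: σ) with hgdef
  have hg : ‖g‖ < 1 := S.hγlt _
  set a := defect S.γ (k :: σ) with hadef
  have hone : (0:ℝ) < 1 - ‖g‖ ^ 2 := by nlinarith [norm_nonneg g]
  have ha2 : a ^ 2 = 1 - ‖g‖ ^ 2 := Real.sq_sqrt hone.le
  have ha : 0 < a := Real.sqrt_pos.mpr hone
  set c : ℂ := ((a : ℂ))⁻¹ with hcdef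
  have hsc : star c = c := by
    simp [hcdef, Complex.star_def, ← Complex.conj_inv, Complex.conj_ofReal]
  have hgg : g * star g = ((‖g‖ ^ 2 : ℝ) : ℂ) := by
    rw [Complex.star_def, Complex.mul_conj, Complex.sq_norm]
  have hcc : c * c * (1 - g * star g) = 1 := by
    have ha' : ((a:ℝ):ℂ) ≠ 0 := by exact_mod_cast ha.ne'
    have h1 : (1:ℂ) - ((‖g‖ ^ 2 : ℝ) : ℂ) = ((a^2 : ℝ) : ℂ) := by
      rw [ha2]; push_cast; ring
    rw [hgg, h1, hcdef]
    push_cast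
    field_simp
  rw [S.recφ, S.recφr, ← hgdef, ← hadef, ← hcdef]
  simp only [map_smul, map_sub, map_add, map_mul, map_neg, hι, starRingEnd_apply, star_smul,
    star_sub, star_add, star_neg, star_mul, hsc, star_star, smul_mul_assoc, mul_smul_comm,
    smul_smul, sub_mul, mul_sub, add_mul, mul_add, smul_sub, smul_add, neg_smul, smul_neg,
    neg_neg, neg_mul, mul_neg, mul_assoc]
  match_scalars <;>
    first
      | linear_combination hcc
      | linear_combination -hcc
      | linear_combination star g * hcc
      | linear_combination (-(star g)) * hcc
      | linear_combination g * hcc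
      | linear_combination (-g) * hcc
      | ring

variable {d : ℕ} (S : SzegoSystem d)

lemma e_zero : S.e 0 = [] := by
  have h := (S.he 0 (S.e.symm [])).mp (Nat.zero_le _)
  rw [S.e.apply_symm_apply] at h
  rcases h with h | ⟨h, _⟩
  · simp at h
  · exact List.length_eq_zero_iff.mp (by simpa using h)

lemma lex_replicate (hd : 1 ≤ d) :
    ∀ (τ : List (Fin d)), τ = List.replicate τ.length (⟨d-1, by omega⟩ : Fin d) ∨
      List.Lex (· < ·) τ (List.replicate τ.length (⟨d-1, by omega⟩ : Fin d)) := by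
  intro τ
  induction τ with
  | nil => left; rfl
  | cons a t ih =>
    have hle : a ≤ (⟨d-1, by omega⟩ : Fin d) := by
      have h2 := a.isLt
      rw [Fin.le_def]
      simpa using by omega
    rcases lt_or_eq_of_le hle with hlt | rfl
    · right
      exact List.Lex.rel hlt
    · rcases ih with h | h
      · left; rw [List.length_cons, List.replicate_succ]; exact congrArg _ h
      · right; rw [List.length_cons, List.replicate_succ]; exact List.Lex.cons h

lemma shortlex_le_sigma (hd : 1 ≤ d) (n : ℕ) (τ : List (Fin d)) :
    ShortlexLE τ (sigmaWord d hd n) ↔ τ.length ≤ n := by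
  constructor
  · rintro (h | ⟨h, -⟩) <;> simp [sigmaWord] at h <;> omega
  · intro h
    rcases lt_or_eq_of_le h with h | h
    · exact Or.inl (by simpa [sigmaWord])
    · refine Or.inr ⟨by simpa [sigmaWord], ?_⟩
      have := lex_replicate hd τ
      rw [h] at this
      simpa [sigmaWord] using this

lemma le_symm_sigma_iff (hd : 1 ≤ d) (n j : ℕ) :
    j ≤ S.e.symm (sigmaWord d hd n) ↔ (S.e j).length ≤ n := by
  rw [S.he j (S.e.symm (sigmaWord d hd n)), S.e.apply_symm_apply, shortlex_le_sigma hd]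

lemma symm_eq_zero_iff (τ : List (Fin d)) : S.e.symm τ = 0 ↔ τ = [] := by
  rw [Equiv.symm_apply_eq, e_zero S]

/-- All words of length `< r`. -/
def wordsR (d r : ℕ) : Finset (List (Fin d)) :=
  (Finset.range r).biUnion fun l =>
    Finset.image (fun f : Fin l → Fin d => List.ofFn f) Finset.univ

lemma mem_wordsR {r : ℕ} (τ : List (Fin d)) : τ ∈ wordsR d r ↔ τ.length < r := by
  simp only [wordsR, Finset.mem_biUnion, Finset.mem_range, Finset.mem_image, Finset.mem_univ,
    true_and]
  constructor
  · rintro ⟨l, hl, f, rfl⟩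
    simpa using hl
  · intro h
    exact ⟨τ.length, h, fun i => τ.get i, List.ofFn_get τ⟩

lemma sum_wordsR {r : ℕ} {M : Type*} [AddCommMonoid M] (G : List (Fin d) → M) :
    ∑ τ ∈ wordsR d r, G τ = ∑ l ∈ Finset.range r, ∑ f : Fin l → Fin d, G (List.ofFn f) := by
  rw [wordsR, Finset.sum_biUnion]
  · refine Finset.sum_congr rfl fun l _ => ?_
    rw [Finset.sum_image (fun f _ g _ h => List.ofFn_injective h)]
  · intro l _ l' _ hne
    simp only [Function.onFun, Finset.disjoint_left, Finset.mem_image, Finset.mem_univ, true_and]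
    rintro τ ⟨f, rfl⟩ ⟨f', hf'⟩
    apply hne
    have := congrArg List.length hf'
    simpa using this.symm

lemma image_e_range (hd : 1 ≤ d) (n : ℕ) :
    (Finset.range (S.e.symm (sigmaWord d hd n) + 1)).image S.e = wordsR d (n+1) := by
  ext τ
  simp only [Finset.mem_image, Finset.mem_range, mem_wordsR, Nat.lt_succ_iff]
  constructor
  · rintro ⟨j, hj, rfl⟩
    exact (le_symm_sigma_iff S hd n j).mp hj
  · intro h
    refine ⟨S.e.symm τ, ?_, S.e.apply_symm_apply τ⟩
    rw [le_symm_sigma_iff S hd n, S.e.apply_symm_apply]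
    exact h

lemma image_e_Ico (hd : 1 ≤ d) (n : ℕ) :
    (Finset.Ico 1 (S.e.symm (sigmaWord d hd n) + 1)).image S.e =
      (Finset.univ ×ˢ wordsR d n).image (fun p : Fin d × List (Fin d) => p.1 :: p.2) := by
  ext τ
  simp only [Finset.mem_image, Finset.mem_Ico, Finset.mem_product, Finset.mem_univ, true_and,
    mem_wordsR, Nat.lt_succ_iff]
  constructor
  · rintro ⟨j, ⟨h1, h2⟩, rfl⟩
    have hlen := (le_symm_sigma_iff S hd n j).mp h2
    have hne : S.e j ≠ [] := by
      intro h
      have h0 := (symm_eq_zero_iff S _).mpr h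
      rw [S.e.symm_apply_apply] at h0
      omega
    cases h : S.e j with
    | nil => exact absurd h hne
    | cons k σ =>
      refine ⟨(k, σ), ?_, rfl⟩
      rw [h] at hlen
      simpa using hlen
  · rintro ⟨⟨k, σ⟩, hσ, rfl⟩
    refine ⟨S.e.symm (k :: σ), ⟨?_, ?_⟩, S.e.apply_symm_apply _⟩
    · rw [Nat.one_le_iff_ne_zero]
      intro h0
      exact absurd ((symm_eq_zero_iff S _).mp h0) (by simp)
    · rw [le_symm_sigma_iff S hd n, S.e.apply_symm_apply]
      simpa using hσ

end Aux

section Main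

variable {d m : ℕ}

private noncomputable def Pm (S : SzegoSystem d) (Z W : Fin d → Matrix (Fin m) (Fin m) ℂ)
    (τ : List (Fin d)) : Matrix (Fin m) (Fin m) ℂ :=
  star (evalM Z (S.φ τ)) * evalM W (S.φ τ)

private noncomputable def Tm (S : SzegoSystem d) (Z W : Fin d → Matrix (Fin m) (Fin m) ℂ)
    (j : ℕ) : Matrix (Fin m) (Fin m) ℂ :=
  star (evalM Z (S.φr (S.e j))) * evalM W (S.φr (S.e j))

private noncomputable def Fm (S : SzegoSystem d) (Z W : Fin d → Matrix (Fin m) (Fin m) ℂ) :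
    List (Fin d) → Matrix (Fin m) (Fin m) ℂ
  | [] => 0
  | k :: σ => star (evalM Z (S.φ σ)) * (star (Z k) * W k) * evalM W (S.φ σ)

private lemma Fm_cons (S : SzegoSystem d) (Z W : Fin d → Matrix (Fin m) (Fin m) ℂ)
    (k : Fin d) (σ : List (Fin d)) :
    Fm S Z W (k :: σ) = star (evalM Z (S.φ σ)) * (star (Z k) * W k) * evalM W (S.φ σ) := rfl

end Main

/-- the summation formula
`φ^#_{σ(n)}(Z)^* φ^#_{σ(n)}(W) − ∑_{|σ| ≤ n} φ_σ(Z)^* φ_σ(W)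
  = − ∑_{k=1}^d ∑_{|σ| ≤ n−1} φ_σ(Z)^* Z_k^* W_k φ_σ(W)`,
where words of length `l` are enumerated as `List.ofFn f`, `f : Fin l → Fin d` (the right-hand
side is the empty sum when `n = 0`). -/
theorem szego_summation_formula {d m : ℕ} (hd : 1 ≤ d) (hm : 1 ≤ m) (S : SzegoSystem d)
    (Z W : Fin d → Matrix (Fin m) (Fin m) ℂ) (n : ℕ) :
    star (evalM Z (S.φr (sigmaWord d hd n))) * evalM W (S.φr (sigmaWord d hd n)) -
        ∑ l ∈ Finset.range (n + 1), ∑ f : Fin l → Fin d,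
          star (evalM Z (S.φ (List.ofFn f))) * evalM W (S.φ (List.ofFn f)) =
      -∑ k : Fin d, ∑ l ∈ Finset.range n, ∑ f : Fin l → Fin d,
          star (evalM Z (S.φ (List.ofFn f))) * (star (Z k) * W k) *
            evalM W (S.φ (List.ofFn f)) := by
  classical
  set M := S.e.symm (sigmaWord d hd n) with hMdef
  have hsig : S.e M = sigmaWord d hd n := S.e.apply_symm_apply _
  -- reindex the φ-sum
  have hPsum : (∑ l ∈ Finset.range (n + 1), ∑ f : Fin l → Fin d,
      star (evalM Z (S.φ (List.ofFn f))) * evalM W (S.φ (List.ofFn f)))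
      = ∑ j ∈ Finset.range (M + 1), Pm S Z W (S.e j) := by
    have e1 : ∑ j ∈ Finset.range (M + 1), Pm S Z W (S.e j)
        = ∑ τ ∈ (Finset.range (M + 1)).image S.e, Pm S Z W τ :=
      (Finset.sum_image fun a _ b _ h => S.e.injective h).symm
    have hir := image_e_range S hd n
    rw [← hMdef] at hir
    rw [e1, hir, sum_wordsR]
    rfl
  -- reindex the triple sum
  have hFsum : (∑ k : Fin d, ∑ l ∈ Finset.range n, ∑ f : Fin l → Fin d,
      star (evalM Z (S.φ (List.ofFn f))) * (star (Z k) * W k) * evalM W (S.φ (List.ofFn f)))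
      = ∑ i ∈ Finset.range M, Fm S Z W (S.e (i + 1)) := by
    have h1 : ∀ k : Fin d, (∑ l ∈ Finset.range n, ∑ f : Fin l → Fin d,
        star (evalM Z (S.φ (List.ofFn f))) * (star (Z k) * W k) * evalM W (S.φ (List.ofFn f)))
        = ∑ σ ∈ wordsR d n, Fm S Z W (k :: σ) :=
      fun k => (sum_wordsR (fun σ => Fm S Z W (k :: σ))).symm
    have hii := image_e_Ico S hd n
    rw [← hMdef] at hii
    calc (∑ k : Fin d, ∑ l ∈ Finset.range n, ∑ f : Fin l → Fin d,
        star (evalM Z (S.φ (List.ofFn f))) * (star (Z k) * W k) * evalM W (S.φ (List.ofFn f)))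
        = ∑ k : Fin d, ∑ σ ∈ wordsR d n, Fm S Z W (k :: σ) :=
          Finset.sum_congr rfl fun k _ => h1 k
      _ = ∑ p ∈ Finset.univ ×ˢ wordsR d n, Fm S Z W (p.1 :: p.2) :=
          (Finset.sum_product (s := Finset.univ) (t := wordsR d n)
            (f := fun p : Fin d × List (Fin d) => Fm S Z W (p.1 :: p.2))).symm
      _ = ∑ τ ∈ (Finset.univ ×ˢ wordsR d n).image (fun p : Fin d × List (Fin d) => p.1 :: p.2),
            Fm S Z W τ := by
          rw [Finset.sum_image]
          rintro ⟨a, s⟩ _ ⟨b, t⟩ _ h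
          simp only [List.cons.injEq] at h
          exact Prod.ext h.1 h.2
      _ = ∑ τ ∈ (Finset.Ico 1 (M + 1)).image S.e, Fm S Z W τ := by rw [hii]
      _ = ∑ j ∈ Finset.Ico 1 (M + 1), Fm S Z W (S.e j) :=
          Finset.sum_image fun a _ b _ h => S.e.injective h
      _ = ∑ i ∈ Finset.range (M + 1 - 1), Fm S Z W (S.e (1 + i)) :=
          Finset.sum_Ico_eq_sum_range (fun j => Fm S Z W (S.e j)) 1 (M + 1)
      _ = ∑ i ∈ Finset.range M, Fm S Z W (S.e (i + 1)) := by
          simp [add_comm]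
  -- the telescoping step
  have tstep : ∀ i : ℕ, Tm S Z W (i + 1) - Tm S Z W i
      = Pm S Z W (S.e (i + 1)) - Fm S Z W (S.e (i + 1)) := by
    intro i
    obtain ⟨k, σ, hkσ⟩ : ∃ k σ, S.e (i + 1) = k :: σ := by
      cases h : S.e (i + 1) with
      | nil =>
        exfalso
        have h0 := (symm_eq_zero_iff S (S.e (i + 1))).mpr h
        rw [S.e.symm_apply_apply] at h0
        omega
      | cons k σ => exact ⟨k, σ, rfl⟩
    have hstep := szego_step S Z W k σ
    have hsymm : S.e.symm (k :: σ) = i + 1 := by rw [← hkσ, S.e.symm_apply_apply]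
    rw [hsymm, Nat.add_sub_cancel] at hstep
    unfold Tm Pm
    rw [hkσ, Fm_cons]
    rw [sub_eq_sub_iff_add_eq_add] at hstep ⊢
    rw [hstep]
    exact add_comm _ _
  -- telescoping sum
  have htel := Finset.sum_range_sub (f := Tm S Z W) M
  simp only [tstep] at htel
  rw [Finset.sum_sub_distrib] at htel
  have hT0 : Tm S Z W 0 = 1 := by
    simp [Tm, e_zero, S.hφr0]
  have hP0 : Pm S Z W (S.e 0) = 1 := by
    simp [Pm, e_zero, S.hφ0]
  have hsplit : ∑ j ∈ Finset.range (M + 1), Pm S Z W (S.e j)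
      = (∑ i ∈ Finset.range M, Pm S Z W (S.e (i + 1))) + Pm S Z W (S.e 0) :=
    Finset.sum_range_succ' _ M
  have hhead : star (evalM Z (S.φr (sigmaWord d hd n))) * evalM W (S.φr (sigmaWord d hd n))
      = Tm S Z W M := by
    rw [Tm, hsig]
  rw [hT0] at htel
  have hTM : Tm S Z W M = (∑ i ∈ Finset.range M, Pm S Z W (S.e (i + 1)))
      - (∑ i ∈ Finset.range M, Fm S Z W (S.e (i + 1))) + 1 :=
    (sub_eq_iff_eq_add.mp htel.symm)
  rw [hhead, hPsum, hFsum, hsplit, hTM, hP0]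
  abel
end

section
/- Given a Szegő system, fix n ∈ ℕ and let Z = (Z_1,…,Z_d) be a d-tuple of m×m complex matrices that is a strict row contraction, i.e. I_m − (Z_1 Z_1^* + ⋯ + Z_d Z_d^*) is positive definite. Then φ^#_{σ(n)}(Z^*)^* φ^#_{σ(n)}(Z^*) is positive definite, where Z^* := (Z_1^*,…,Z_d^*); in particular det φ^#_{σ(n)}(Z^*) ≠ 0. Hence every determinantal zero of the matrix-evaluation Z ↦ φ^#_{σ(n)}(Z^*) lies outside the row-ball. -/
open scoped BigOperators ComplexOrder

/- ----------------------------------------------------------------- auxiliary lemmas -/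

lemma step_eq {m : ℕ} (X Y : Matrix (Fin m) (Fin m) ℂ) (γ c : ℂ) (hcr : star c = c)
    (hc : c * c * (1 - starRingEnd ℂ γ * γ) = 1) :
    star (c • ((-(starRingEnd ℂ γ)) • X + Y)) * (c • ((-(starRingEnd ℂ γ)) • X + Y)) =
      star (c • (X - γ • Y)) * (c • (X - γ • Y)) + star Y * Y - star X * X := by
  simp only [starRingEnd_apply, star_smul, star_add, star_sub, star_neg, star_star, hcr,
    smul_add, smul_sub, smul_mul_assoc, mul_smul_comm, add_mul, sub_mul, mul_add, mul_sub,
    neg_smul, smul_neg, neg_mul, mul_neg, neg_neg, smul_smul, star_mul']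
  rw [starRingEnd_apply] at hc
  match_scalars <;> first | ring1 | linear_combination hc | linear_combination -hc

namespace SzegoSystem

variable {d : ℕ}

lemma e_zero_s15 (S : SzegoSystem d) : S.e 0 = [] := by
  have h := (S.he 0 (S.e.symm [])).mp (Nat.zero_le _)
  rw [Equiv.apply_symm_apply] at h
  rcases h with h | ⟨h, _⟩
  · simp at h
  · exact List.length_eq_zero_iff.mp h

lemma symm_nil (S : SzegoSystem d) : S.e.symm [] = 0 := by
  rw [← S.e_zero_s15, Equiv.symm_apply_apply]

lemma symm_cons_lt (S : SzegoSystem d) (k : Fin d) (σ : List (Fin d)) :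
    S.e.symm σ < S.e.symm (k :: σ) := by
  have hle : S.e.symm σ ≤ S.e.symm (k :: σ) := by
    rw [S.he, Equiv.apply_symm_apply, Equiv.apply_symm_apply]
    exact Or.inl (by simp)
  have hne : S.e.symm σ ≠ S.e.symm (k :: σ) := by
    intro h
    exact (List.cons_ne_self k σ) (S.e.symm.injective h).symm
  omega

end SzegoSystem

lemma szego_key_s15 {d m : ℕ} (S : SzegoSystem d) (Z : Fin d → Matrix (Fin m) (Fin m) ℂ) (N : ℕ) :
    star (evalM (fun j => star (Z j)) (S.φr (S.e N))) *
        evalM (fun j => star (Z j)) (S.φr (S.e N)) =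
      ∑ j ∈ Finset.range (N + 1),
        star (evalM (fun j => star (Z j)) (S.φ (S.e j))) *
          (((1 : Matrix (Fin m) (Fin m) ℂ) -
              ∑ k ∈ Finset.univ.filter (fun k : Fin d => S.e.symm (k :: S.e j) ≤ N),
                Z k * star (Z k)) *
            evalM (fun j => star (Z j)) (S.φ (S.e j))) := by
  set A := fun j => star (Z j) with hA
  induction N with
  | zero =>
    have hfilter : (Finset.univ.filter (fun k : Fin d => S.e.symm (k :: S.e 0) ≤ 0)) = ∅ := by
      ext k
      simp only [Finset.mem_filter, Finset.mem_univ, true_and, Finset.notMem_empty, iff_false]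
      intro hk
      have h1 := S.symm_cons_lt k (S.e 0)
      rw [Equiv.symm_apply_apply] at h1
      omega
    rw [Finset.sum_range_one, hfilter, S.e_zero_s15, S.hφ0, S.hφr0]
    simp
  | succ N ih =>
    obtain ⟨k₀, σ₀, hτ⟩ : ∃ k₀ σ₀, S.e (N + 1) = k₀ :: σ₀ := by
      cases hE : S.e (N + 1) with
      | nil =>
        exfalso
        have h1 := congrArg S.e.symm hE
        rw [Equiv.symm_apply_apply, S.symm_nil] at h1
        omega
      | cons a l => exact ⟨a, l, rfl⟩
    have hsymm : S.e.symm (k₀ :: σ₀) = N + 1 := by rw [← hτ, Equiv.symm_apply_apply]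
    have hj₀lt := S.symm_cons_lt k₀ σ₀
    rw [hsymm] at hj₀lt
    set j₀ := S.e.symm σ₀ with hj₀def
    have hej₀ : S.e j₀ = σ₀ := Equiv.apply_symm_apply _ _
    -- the defect scalar
    set γ₀ := S.γ (k₀ :: σ₀) with hγ₀def
    set c : ℂ := (((defect S.γ (k₀ :: σ₀) : ℝ) : ℂ))⁻¹ with hcdef
    have hd0 : (0 : ℝ) < defect S.γ (k₀ :: σ₀) := by
      have h1 := S.hγlt (k₀ :: σ₀)
      have h2 : ‖S.γ (k₀ :: σ₀)‖ ^ 2 < 1 :=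
        pow_lt_one₀ (norm_nonneg _) h1 two_ne_zero
      exact Real.sqrt_pos.mpr (by linarith)
    have hcr : star c = c := by
      rw [hcdef]
      simp [Complex.star_def, map_inv₀, Complex.conj_ofReal]
    have hc : c * c * (1 - starRingEnd ℂ γ₀ * γ₀) = 1 := by
      have hsq : (defect S.γ (k₀ :: σ₀)) ^ 2 = 1 - ‖γ₀‖ ^ 2 := by
        rw [defect, Real.sq_sqrt]
        have h2 : ‖S.γ (k₀ :: σ₀)‖ ^ 2 < 1 :=
          pow_lt_one₀ (norm_nonneg _) (S.hγlt _) two_ne_zero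
        linarith
      have hmc : (starRingEnd ℂ γ₀) * γ₀ = ((‖γ₀‖ ^ 2 : ℝ) : ℂ) := by
        rw [mul_comm, Complex.mul_conj, Complex.normSq_eq_norm_sq]
      rw [hmc, hcdef]
      have : ((1 : ℂ) - ((‖γ₀‖ ^ 2 : ℝ) : ℂ))
          = (((defect S.γ (k₀ :: σ₀)) ^ 2 : ℝ) : ℂ) := by
        rw [hsq]; push_cast; ring
      rw [this]
      push_cast
      have hne : ((defect S.γ (k₀ :: σ₀) : ℝ) : ℂ) ≠ 0 := by
        simp only [ne_eq, Complex.ofReal_eq_zero]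
        exact ne_of_gt hd0
      field_simp
      all_goals ring
    -- the recurrences, evaluated
    have hrecr := S.recφr k₀ σ₀
    have hrec := S.recφ k₀ σ₀
    rw [hsymm, Nat.add_sub_cancel] at hrecr hrec
    set X : Matrix (Fin m) (Fin m) ℂ := A k₀ * evalM A (S.φ σ₀) with hX
    set Y : Matrix (Fin m) (Fin m) ℂ := evalM A (S.φr (S.e N)) with hY
    have hPr1 : evalM A (S.φr (S.e (N + 1))) = c • ((-(starRingEnd ℂ γ₀)) • X + Y) := by
      rw [hτ, hrecr]
      simp only [map_smul, map_add, map_mul, map_neg, evalM, FreeAlgebra.lift_ι_apply]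
      rfl
    have hP1 : evalM A (S.φ (S.e (N + 1))) = c • (X - γ₀ • Y) := by
      rw [hτ, hrec]
      simp only [map_smul, map_sub, map_mul, evalM, FreeAlgebra.lift_ι_apply]
      rfl
    rw [hPr1, step_eq X Y γ₀ c hcr hc, ← hP1, ih]
    -- now manipulate the right-hand side
    conv_rhs => rw [Finset.sum_range_succ]
    have hlast : Finset.univ.filter
        (fun k : Fin d => S.e.symm (k :: S.e (N + 1)) ≤ N + 1) = ∅ := by
      ext k
      simp only [Finset.mem_filter, Finset.mem_univ, true_and, Finset.notMem_empty, iff_false]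
      intro hk
      have h1 := S.symm_cons_lt k (S.e (N + 1))
      rw [Equiv.symm_apply_apply] at h1
      omega
    rw [hlast]
    have hsplit : ∀ j ∈ Finset.range (N + 1),
        star (evalM A (S.φ (S.e j))) *
          (((1 : Matrix (Fin m) (Fin m) ℂ) -
              ∑ k ∈ Finset.univ.filter (fun k : Fin d => S.e.symm (k :: S.e j) ≤ N + 1),
                Z k * star (Z k)) * evalM A (S.φ (S.e j))) =
        star (evalM A (S.φ (S.e j))) *
          (((1 : Matrix (Fin m) (Fin m) ℂ) -
              ∑ k ∈ Finset.univ.filter (fun k : Fin d => S.e.symm (k :: S.e j) ≤ N),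
                Z k * star (Z k)) * evalM A (S.φ (S.e j))) -
          (if j = j₀ then
            star (evalM A (S.φ σ₀)) * ((Z k₀ * star (Z k₀)) * evalM A (S.φ σ₀)) else 0) := by
      intro j hj
      rw [Finset.mem_range] at hj
      by_cases hjj : j = j₀
      · subst hjj
        rw [if_pos rfl, hej₀]
        have hins : Finset.univ.filter (fun k : Fin d => S.e.symm (k :: σ₀) ≤ N + 1)
            = insert k₀ (Finset.univ.filter (fun k : Fin d => S.e.symm (k :: σ₀) ≤ N)) := by
          ext k
          simp only [Finset.mem_filter, Finset.mem_univ, true_and, Finset.mem_insert]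
          constructor
          · intro hk
            rcases Nat.lt_or_ge (S.e.symm (k :: σ₀)) (N + 1) with h | h
            · exact Or.inr (by omega)
            · have hkeq : S.e.symm (k :: σ₀) = N + 1 := by omega
              have : k :: σ₀ = k₀ :: σ₀ := by
                have := congrArg S.e hkeq
                rw [Equiv.apply_symm_apply, hτ] at this
                exact this
              exact Or.inl (List.head_eq_of_cons_eq this)
          · rintro (rfl | hk)
            · rw [hsymm]
            · omega
        have hk₀ : k₀ ∉ Finset.univ.filter (fun k : Fin d => S.e.symm (k :: σ₀) ≤ N) := by
          simp only [Finset.mem_filter, Finset.mem_univ, true_and, hsymm]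
          omega
        rw [hins, Finset.sum_insert hk₀]
        noncomm_ring
      · rw [if_neg hjj, sub_zero]
        have heq : Finset.univ.filter (fun k : Fin d => S.e.symm (k :: S.e j) ≤ N + 1)
            = Finset.univ.filter (fun k : Fin d => S.e.symm (k :: S.e j) ≤ N) := by
          ext k
          simp only [Finset.mem_filter, Finset.mem_univ, true_and]
          constructor
          · intro hk
            rcases Nat.lt_or_ge (S.e.symm (k :: S.e j)) (N + 1) with h | h
            · omega
            · exfalso
              have hkeq : S.e.symm (k :: S.e j) = N + 1 := by omega
              have h2 : k :: S.e j = k₀ :: σ₀ := by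
                have := congrArg S.e hkeq
                rw [Equiv.apply_symm_apply, hτ] at this
                exact this
              have h3 : S.e j = σ₀ := List.tail_eq_of_cons_eq h2
              apply hjj
              rw [hj₀def, ← h3, Equiv.symm_apply_apply]
          · omega
        rw [heq]
    rw [Finset.sum_congr rfl hsplit, Finset.sum_sub_distrib]
    have hsum_ite : (∑ j ∈ Finset.range (N + 1),
        if j = j₀ then
          star (evalM A (S.φ σ₀)) * ((Z k₀ * star (Z k₀)) * evalM A (S.φ σ₀)) else 0) =
        star (evalM A (S.φ σ₀)) * ((Z k₀ * star (Z k₀)) * evalM A (S.φ σ₀)) := by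
      rw [Finset.sum_ite_eq' (Finset.range (N + 1)) j₀
        (fun _ => star (evalM A (S.φ σ₀)) * ((Z k₀ * star (Z k₀)) * evalM A (S.φ σ₀)))]
      rw [if_pos (Finset.mem_range.mpr (by omega))]
    rw [hsum_ite]
    have hXX : star X * X =
        star (evalM A (S.φ σ₀)) * ((Z k₀ * star (Z k₀)) * evalM A (S.φ σ₀)) := by
      rw [hX, hA]
      simp only [star_mul, star_star]
      noncomm_ring
    rw [hXX]
    simp only [Finset.sum_empty, sub_zero, one_mul]
    abel

/-- if `Z` is a strict row contraction (`I − ∑_k Z_k Z_k^*` positive definite),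
then `φ^#_{σ(n)}(Z^*)^* φ^#_{σ(n)}(Z^*)` is positive definite and `det φ^#_{σ(n)}(Z^*) ≠ 0`;
hence every determinantal zero of `Z ↦ φ^#_{σ(n)}(Z^*)` lies outside the row-ball. -/
theorem reverse_poly_no_zeros_in_ball {d m : ℕ} (hd : 1 ≤ d) (hm : 1 ≤ m) (S : SzegoSystem d)
    (n : ℕ) (Z : Fin d → Matrix (Fin m) (Fin m) ℂ)
    (hZ : ((1 : Matrix (Fin m) (Fin m) ℂ) - ∑ k : Fin d, Z k * star (Z k)).PosDef) :
    (star (evalM (fun j => star (Z j)) (S.φr (sigmaWord d hd n))) *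
        evalM (fun j => star (Z j)) (S.φr (sigmaWord d hd n))).PosDef ∧
      (evalM (fun j => star (Z j)) (S.φr (sigmaWord d hd n))).det ≠ 0 := by
  set A := fun j => star (Z j) with hA
  set N := S.e.symm (sigmaWord d hd n) with hN
  have heN : S.e N = sigmaWord d hd n := Equiv.apply_symm_apply _ _
  have hkey := szego_key_s15 S Z N
  rw [heN] at hkey
  have hB : ∀ F : Finset (Fin d),
      ((1 : Matrix (Fin m) (Fin m) ℂ) - ∑ k ∈ F, Z k * star (Z k)).PosDef := by
    intro F
    have hdecomp : (1 : Matrix (Fin m) (Fin m) ℂ) - ∑ k ∈ F, Z k * star (Z k) =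
        ((1 : Matrix (Fin m) (Fin m) ℂ) - ∑ k : Fin d, Z k * star (Z k)) +
          ∑ k ∈ Fᶜ, Z k * star (Z k) := by
      have h := Finset.sum_add_sum_compl F (fun k => Z k * star (Z k))
      rw [← h]
      abel
    rw [hdecomp]
    refine hZ.add_posSemidef ?_
    refine Finset.sum_induction _ _ (fun a b ha hb => ha.add hb) Matrix.PosSemidef.zero ?_
    intro k _
    have := Matrix.posSemidef_self_mul_conjTranspose (Z k)
    rwa [Matrix.star_eq_conjTranspose]
  have hterm : ∀ j,
      (star (evalM A (S.φ (S.e j))) *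
        (((1 : Matrix (Fin m) (Fin m) ℂ) -
            ∑ k ∈ Finset.univ.filter (fun k : Fin d => S.e.symm (k :: S.e j) ≤ N),
              Z k * star (Z k)) * evalM A (S.φ (S.e j)))).PosSemidef := by
    intro j
    rw [Matrix.star_eq_conjTranspose, ← Matrix.mul_assoc]
    exact ((hB _).posSemidef).conjTranspose_mul_mul_same _
  have hPD : (star (evalM A (S.φr (sigmaWord d hd n))) *
      evalM A (S.φr (sigmaWord d hd n))).PosDef := by
    rw [hkey, Finset.sum_range_succ']
    refine Matrix.PosDef.posSemidef_add ?_ ?_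
    · exact Finset.sum_induction _ _ (fun a b ha hb => ha.add hb) Matrix.PosSemidef.zero
        (fun i _ => hterm (i + 1))
    · have h0 : evalM A (S.φ (S.e 0)) = 1 := by rw [S.e_zero_s15, S.hφ0, map_one]
      have := hterm 0
      rw [h0] at this ⊢
      simpa using hB (Finset.univ.filter (fun k : Fin d => S.e.symm (k :: S.e 0) ≤ N))
  refine ⟨hPD, ?_⟩
  intro h0
  have hdet := hPD.det_pos
  rw [Matrix.star_eq_conjTranspose, Matrix.det_mul, Matrix.det_conjTranspose, h0] at hdet
  simp at hdet
end

section
/- Given a Szegő system, fix n ∈ ℕ and let Z = (Z_1,…,Z_d) be a d-tuple of m×m complex matrices with (Z_1 Z_1^* + ⋯ + Z_d Z_d^*) − I_m positive definite (i.e. Z lies in the exterior Ext of the closed row-ball). Then ∑_{σ : |σ| = n} φ_σ(Z^*)^* φ_σ(Z^*) is positive definite, where Z^* := (Z_1^*,…,Z_d^*) and the sum is over all words of length n; in particular det(∑_{|σ| = n} φ_σ(Z^*)^* φ_σ(Z^*)) ≠ 0. -/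
open scoped BigOperators ComplexOrder

/-! ### Auxiliary lemmas -/

namespace SzegoAux

open Matrix

lemma matrix_key {m : ℕ} {c : ℝ} (hc : 0 < c) {g : ℂ}
    (hg : (c:ℂ) * c = 1 - g * starRingEnd ℂ g)
    (u v : Matrix (Fin m) (Fin m) ℂ) :
    star ((c:ℂ)⁻¹ • (u - g • v)) * ((c:ℂ)⁻¹ • (u - g • v)) -
      star ((c:ℂ)⁻¹ • ((-(starRingEnd ℂ g)) • u + v)) * ((c:ℂ)⁻¹ • ((-(starRingEnd ℂ g)) • u + v))
      = star u * u - star v * v := by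
  have hc0 : (c:ℂ) ≠ 0 := Complex.ofReal_ne_zero.mpr hc.ne'
  have h : (c:ℂ)⁻¹ * (c:ℂ)⁻¹ * (1 - g * starRingEnd ℂ g) = 1 := by
    rw [← hg]; field_simp
  simp only [star_smul, star_sub, star_add, star_neg, smul_mul_assoc, mul_smul_comm,
    sub_mul, mul_sub, add_mul, mul_add, smul_smul, neg_smul, smul_sub, smul_add, star_star,
    RCLike.star_def, Complex.conj_conj, Complex.conj_ofReal, _root_.map_inv₀, _root_.map_mul, smul_neg,
    neg_neg, neg_sub, sub_neg_eq_add, neg_mul, mul_neg]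
  match_scalars
  any_goals ring1
  all_goals first
    | linear_combination h
    | linear_combination -h

lemma lex_replicate_top {d : ℕ} (t : Fin d) (ht : ∀ a : Fin d, a ≤ t) :
    ∀ (w : List (Fin d)) (n : ℕ), w.length = n → w ≠ List.replicate n t →
      List.Lex (· < ·) w (List.replicate n t) := by
  intro w
  induction w with
  | nil =>
    intro n h h2
    cases n with
    | zero => simp at h2
    | succ n => simp at h
  | cons a w ih =>
    intro n h h2
    cases n with
    | zero => simp at h
    | succ n =>
      rw [List.replicate_succ]
      rcases lt_or_eq_of_le (ht a) with hlt | heq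
      · exact List.Lex.rel hlt
      · subst heq
        refine List.Lex.cons (ih n (by simpa using h) ?_)
        intro hc
        exact h2 (by rw [List.replicate_succ, hc])

lemma shortlex_le_sigma {d : ℕ} (hd : 1 ≤ d) (w : List (Fin d)) (n : ℕ) :
    ShortlexLE w (sigmaWord d hd n) ↔ w.length ≤ n := by
  have hlen : (sigmaWord d hd n).length = n := List.length_replicate
  constructor
  · rintro (h | ⟨h, -⟩) <;> omega
  · intro h
    rcases lt_or_eq_of_le h with h' | h'
    · exact Or.inl (by omega)
    · refine Or.inr ⟨by omega, ?_⟩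
      by_cases hw : w = sigmaWord d hd n
      · exact Or.inl hw
      · refine Or.inr (lex_replicate_top _ ?_ w n h' hw)
        intro a
        have := a.isLt
        rw [Fin.le_def]
        simp only []
        omega

variable {d : ℕ} (S : SzegoSystem d)

/-- The index of the largest word of length `n`. -/
noncomputable def Lidx (hd : 1 ≤ d) (n : ℕ) : ℕ := S.e.symm (sigmaWord d hd n)

lemma e_Lidx (hd : 1 ≤ d) (n : ℕ) : S.e (Lidx S hd n) = sigmaWord d hd n :=
  S.e.apply_symm_apply _

lemma le_Lidx_iff (hd : 1 ≤ d) (x n : ℕ) :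
    x ≤ Lidx S hd n ↔ (S.e x).length ≤ n := by
  rw [S.he x (Lidx S hd n), e_Lidx, shortlex_le_sigma]

lemma mem_Ioc_iff (hd : 1 ≤ d) (x n : ℕ) :
    x ∈ Finset.Ioc (Lidx S hd n) (Lidx S hd (n + 1)) ↔ (S.e x).length = n + 1 := by
  rw [Finset.mem_Ioc]
  constructor
  · rintro ⟨h1, h2⟩
    rw [le_Lidx_iff] at h2
    have h3 : ¬ x ≤ Lidx S hd n := by omega
    rw [le_Lidx_iff] at h3
    omega
  · intro h
    constructor
    · by_contra hc
      push_neg at hc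
      rw [le_Lidx_iff] at hc
      omega
    · rw [le_Lidx_iff]; omega

lemma Lidx_mono (hd : 1 ≤ d) (n : ℕ) : Lidx S hd n ≤ Lidx S hd (n + 1) := by
  rw [le_Lidx_iff, e_Lidx]
  simp [sigmaWord]

lemma telescope {M : Type*} [AddCommGroup M] (f : ℕ → M) (a b : ℕ) (hb : a ≤ b) :
    ∑ x ∈ Finset.Ioc a b, (f x - f (x - 1)) = f b - f a := by
  induction b, hb using Nat.le_induction with
  | base => simp
  | succ b hb ih =>
    rw [Finset.sum_Ioc_succ_top (by omega), ih]
    simp only [Nat.add_sub_cancel]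
    abel

lemma ofFn_getD {α : Type*} (a0 : α) :
    ∀ (w : List α) (n : ℕ), w.length = n →
      (List.ofFn (fun i : Fin n => w.getD i a0)) = w := by
  intro w
  induction w with
  | nil =>
    intro n h
    cases n with
    | zero => simp
    | succ n => simp at h
  | cons a w ih =>
    intro n h
    cases n with
    | zero => simp at h
    | succ n =>
      simp only [List.ofFn_succ, Fin.val_zero, List.getD_cons_zero, Fin.val_succ,
        List.getD_cons_succ]
      rw [ih n (by simpa using h)]

lemma getD_ofFn {α : Type*} (a0 : α) {n : ℕ} (f : Fin n → α) (i : Fin n) :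
    (List.ofFn f).getD i a0 = f i := by
  rw [List.getD_eq_getElem _ _ (by simp [i.isLt])]
  simp

/-- Reindexing a sum over words of length `n+1` as a sum over the interval of indices. -/
lemma sum_words_eq {M : Type*} [AddCommMonoid M] (hd : 1 ≤ d) (n : ℕ)
    (F : List (Fin d) → M) :
    ∑ f : Fin (n + 1) → Fin d, F (List.ofFn f) =
      ∑ x ∈ Finset.Ioc (Lidx S hd n) (Lidx S hd (n + 1)), F (S.e x) := by
  refine Finset.sum_nbij' (i := fun f => S.e.symm (List.ofFn f))
    (j := fun x => fun i : Fin (n + 1) => (S.e x).getD i ⟨0, by omega⟩)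
    (fun f _ => ?_) (fun x hx => Finset.mem_univ _) (fun f _ => ?_) (fun x hx => ?_)
    (fun f _ => ?_)
  · rw [mem_Ioc_iff S hd, S.e.apply_symm_apply]
    simp
  · funext i
    rw [S.e.apply_symm_apply]
    exact getD_ofFn _ _ _
  · rw [mem_Ioc_iff S hd] at hx
    rw [ofFn_getD _ _ _ hx, S.e.symm_apply_apply]
  · rw [S.e.apply_symm_apply]


/-! ### Matrix positivity helpers -/

lemma sum_mulVec {m : ℕ} {ι : Type*} (s : Finset ι) (A : ι → Matrix (Fin m) (Fin m) ℂ)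
    (x : Fin m → ℂ) : (∑ i ∈ s, A i) *ᵥ x = ∑ i ∈ s, A i *ᵥ x := by
  classical
  induction s using Finset.induction with
  | empty => simp [Matrix.zero_mulVec]
  | insert _ _ hx ih => simp [Finset.sum_insert hx, Matrix.add_mulVec, ih]

lemma dotProduct_sum' {m : ℕ} {ι : Type*} (s : Finset ι) (v : Fin m → ℂ)
    (w : ι → Fin m → ℂ) : v ⬝ᵥ (∑ i ∈ s, w i) = ∑ i ∈ s, v ⬝ᵥ w i := by
  classical
  induction s using Finset.induction with
  | empty => simp
  | insert _ _ hx ih => simp [Finset.sum_insert hx, dotProduct_add, ih]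

lemma posSemidef_sum {m : ℕ} {ι : Type*} (s : Finset ι) (f : ι → Matrix (Fin m) (Fin m) ℂ)
    (h : ∀ i ∈ s, (f i).PosSemidef) : (∑ i ∈ s, f i).PosSemidef := by
  classical
  induction s using Finset.induction with
  | empty => simpa using (Matrix.PosSemidef.zero (n := Fin m) (R := ℂ))
  | @insert a s hx ih =>
    rw [Finset.sum_insert hx]
    exact (h a (Finset.mem_insert_self _ _)).add
      (ih fun i hi => h i (Finset.mem_insert_of_mem hi))

lemma sum_conj_posDef {m : ℕ} {ι : Type*} [Fintype ι] {P : Matrix (Fin m) (Fin m) ℂ}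
    (hP : P.PosDef) (B : ι → Matrix (Fin m) (Fin m) ℂ)
    (hB : (∑ i : ι, star (B i) * B i).PosDef) :
    (∑ i : ι, star (B i) * (P * B i)).PosDef := by
  have hT : ∀ i : ι, star (B i) * (P * B i) = (B i)ᴴ * P * (B i) := by
    intro i
    rw [Matrix.star_eq_conjTranspose, Matrix.mul_assoc]
  refine Matrix.PosDef.of_dotProduct_mulVec_pos ?_ ?_
  · show (∑ i : ι, star (B i) * (P * B i))ᴴ = _
    rw [Matrix.conjTranspose_sum]
    refine Finset.sum_congr rfl fun i _ => ?_
    rw [hT i]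
    simp [Matrix.conjTranspose_mul, Matrix.mul_assoc, hP.1.eq]
  · intro x hx
    have hex : ∃ i, B i *ᵥ x ≠ 0 := by
      by_contra hc
      push_neg at hc
      have h0 : (∑ i : ι, star (B i) * B i) *ᵥ x = 0 := by
        rw [sum_mulVec]
        refine Finset.sum_eq_zero fun i _ => ?_
        rw [← Matrix.mulVec_mulVec, hc i, Matrix.mulVec_zero]
      have hlt := hB.dotProduct_mulVec_pos hx
      rw [h0] at hlt
      simp at hlt
    obtain ⟨i0, hi0⟩ := hex
    rw [sum_mulVec, dotProduct_sum']
    refine Finset.sum_pos' (fun i _ => ?_) ⟨i0, Finset.mem_univ _, ?_⟩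
    · rw [hT i]
      exact (hP.posSemidef.conjTranspose_mul_mul_same (B i)).dotProduct_mulVec_nonneg x
    · rw [hT i0]
      simpa only [Matrix.star_mulVec, Matrix.dotProduct_mulVec, Matrix.vecMul_vecMul]
        using hP.dotProduct_mulVec_pos hi0

/-! ### The Szegő recursion at the matrix level -/

variable {m : ℕ} (Z : Fin d → Matrix (Fin m) (Fin m) ℂ)

/-- Evaluation at the adjoint tuple. -/
noncomputable def EV : FreeAlgebra ℂ (Fin d) →ₐ[ℂ] Matrix (Fin m) (Fin m) ℂ :=
  evalM (fun j => star (Z j))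

noncomputable def GG (w : List (Fin d)) : Matrix (Fin m) (Fin m) ℂ :=
  star (EV Z (S.φ w)) * EV Z (S.φ w)

noncomputable def FF (w : List (Fin d)) : Matrix (Fin m) (Fin m) ℂ :=
  star (EV Z (S.φr w)) * EV Z (S.φr w)

lemma EV_ι (k : Fin d) : EV Z (FreeAlgebra.ι ℂ k) = star (Z k) := by
  simp [EV, evalM, FreeAlgebra.lift_ι_apply]

lemma per_word (k : Fin d) (σ : List (Fin d)) :
    GG S Z (k :: σ) - FF S Z (k :: σ) =
      star (star (Z k) * EV Z (S.φ σ)) * (star (Z k) * EV Z (S.φ σ))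
        - FF S Z (S.e (S.e.symm (k :: σ) - 1)) := by
  have hγ := S.hγlt (k :: σ)
  have h1 : 0 < 1 - ‖S.γ (k :: σ)‖ ^ 2 := by
    nlinarith [norm_nonneg (S.γ (k :: σ))]
  have hc : 0 < defect S.γ (k :: σ) := Real.sqrt_pos.mpr h1
  have hg : ((defect S.γ (k :: σ) : ℝ) : ℂ) * ((defect S.γ (k :: σ) : ℝ) : ℂ) =
      1 - S.γ (k :: σ) * starRingEnd ℂ (S.γ (k :: σ)) := by
    rw [← Complex.ofReal_mul, defect, Real.mul_self_sqrt (le_of_lt h1),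
      Complex.mul_conj, Complex.normSq_eq_norm_sq]
    push_cast
    ring
  have e1 : EV Z (S.φ (k :: σ)) = ((defect S.γ (k :: σ) : ℝ) : ℂ)⁻¹ •
      (star (Z k) * EV Z (S.φ σ) -
        S.γ (k :: σ) • EV Z (S.φr (S.e (S.e.symm (k :: σ) - 1)))) := by
    rw [S.recφ k σ, _root_.map_smul, _root_.map_sub, _root_.map_mul, _root_.map_smul, EV_ι]
  have e2 : EV Z (S.φr (k :: σ)) = ((defect S.γ (k :: σ) : ℝ) : ℂ)⁻¹ •
      ((-(starRingEnd ℂ (S.γ (k :: σ)))) • (star (Z k) * EV Z (S.φ σ)) +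
        EV Z (S.φr (S.e (S.e.symm (k :: σ) - 1)))) := by
    rw [S.recφr k σ, _root_.map_smul, _root_.map_add, _root_.map_smul, _root_.map_mul, EV_ι]
  unfold GG FF
  rw [e1, e2]
  exact matrix_key hc hg _ _

/-- The key summed Szegő step identity. -/
lemma step (hd : 1 ≤ d) (n : ℕ) :
    ∑ f : Fin (n + 1) → Fin d, GG S Z (List.ofFn f) =
      (∑ g : Fin n → Fin d, star (EV Z (S.φ (List.ofFn g))) *
          ((∑ k : Fin d, Z k * star (Z k)) * EV Z (S.φ (List.ofFn g))))
        + FF S Z (sigmaWord d hd (n + 1)) - FF S Z (sigmaWord d hd n) := by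
  have key : ∀ f : Fin (n + 1) → Fin d,
      GG S Z (List.ofFn f) =
        (star (star (Z (f 0)) * EV Z (S.φ (List.ofFn fun i : Fin n => f i.succ))) *
          (star (Z (f 0)) * EV Z (S.φ (List.ofFn fun i : Fin n => f i.succ))))
        + (FF S Z (List.ofFn f) - FF S Z (S.e (S.e.symm (List.ofFn f) - 1))) := by
    intro f
    have hw : List.ofFn f = f 0 :: List.ofFn fun i : Fin n => f i.succ := List.ofFn_succ
    rw [hw]
    have h := per_word S Z (f 0) (List.ofFn fun i : Fin n => f i.succ)
    have h2 := eq_add_of_sub_eq h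
    rw [h2]
    abel
  rw [Finset.sum_congr rfl fun f _ => key f]
  have hmain : ∑ f : Fin (n + 1) → Fin d,
      (star (star (Z (f 0)) * EV Z (S.φ (List.ofFn fun i : Fin n => f i.succ))) *
        (star (Z (f 0)) * EV Z (S.φ (List.ofFn fun i : Fin n => f i.succ)))) =
      ∑ g : Fin n → Fin d, star (EV Z (S.φ (List.ofFn g))) *
          ((∑ k : Fin d, Z k * star (Z k)) * EV Z (S.φ (List.ofFn g))) := by
    have hre : ∑ f : Fin (n + 1) → Fin d,
        (star (star (Z (f 0)) * EV Z (S.φ (List.ofFn fun i : Fin n => f i.succ))) *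
          (star (Z (f 0)) * EV Z (S.φ (List.ofFn fun i : Fin n => f i.succ)))) =
        ∑ p : Fin d × (Fin n → Fin d),
          (star (star (Z p.1) * EV Z (S.φ (List.ofFn p.2))) *
            (star (Z p.1) * EV Z (S.φ (List.ofFn p.2)))) := by
      refine (Fintype.sum_equiv (Fin.consEquiv fun _ => Fin d) _ _ fun p => ?_).symm
      simp [Fin.consEquiv, Fin.cons_zero, Fin.cons_succ]
    rw [hre, Fintype.sum_prod_type_right]
    refine Finset.sum_congr rfl fun g _ => ?_
    rw [Finset.sum_mul, Finset.mul_sum]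
    refine Finset.sum_congr rfl fun k _ => ?_
    rw [Matrix.star_mul, star_star]
    simp only [Matrix.mul_assoc]
  have htel : (∑ f : Fin (n + 1) → Fin d, FF S Z (List.ofFn f)) -
      (∑ f : Fin (n + 1) → Fin d, FF S Z (S.e (S.e.symm (List.ofFn f) - 1))) =
      FF S Z (sigmaWord d hd (n + 1)) - FF S Z (sigmaWord d hd n) := by
    rw [sum_words_eq S hd n (FF S Z),
      sum_words_eq S hd n (fun w => FF S Z (S.e (S.e.symm w - 1)))]
    simp only [S.e.symm_apply_apply]
    rw [← Finset.sum_sub_distrib,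
      telescope (fun x => FF S Z (S.e x)) _ _ (Lidx_mono S hd n),
      e_Lidx, e_Lidx]
  rw [Finset.sum_add_distrib, Finset.sum_sub_distrib, hmain, htel, add_sub_assoc]

lemma GG_def (w : List (Fin d)) :
    GG S Z w = star (EV Z (S.φ w)) * EV Z (S.φ w) := rfl

lemma FF_posSemidef (w : List (Fin d)) : (FF S Z w).PosSemidef := by
  rw [FF, Matrix.star_eq_conjTranspose]
  exact Matrix.posSemidef_conjTranspose_mul_self _

lemma main_induction (hd : 1 ≤ d)
    (hZ : ((∑ k : Fin d, Z k * star (Z k)) - 1).PosDef) (n : ℕ) :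
    (∑ f : Fin n → Fin d, GG S Z (List.ofFn f)).PosDef ∧
    ((∑ f : Fin n → Fin d, GG S Z (List.ofFn f)) - FF S Z (sigmaWord d hd n)).PosSemidef := by
  induction n with
  | zero =>
    have h1 : ∑ f : Fin 0 → Fin d, GG S Z (List.ofFn f) = 1 := by
      have h0 : ∀ f : Fin 0 → Fin d, GG S Z (List.ofFn f) = 1 := by
        intro f
        rw [List.ofFn_zero, GG_def, S.hφ0, _root_.map_one, star_one, one_mul]
      rw [Finset.sum_congr rfl fun f _ => h0 f, Finset.sum_const]
      simp
    have h2 : FF S Z (sigmaWord d hd 0) = 1 := by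
      show FF S Z [] = 1
      rw [FF, S.hφr0, _root_.map_one, star_one, one_mul]
    rw [h1, h2, sub_self]
    exact ⟨Matrix.PosDef.one, Matrix.PosSemidef.zero⟩
  | succ n ih =>
    have hstep := step S Z hd n
    have hsplit : ∀ P : Matrix (Fin m) (Fin m) ℂ,
        star P * ((∑ k : Fin d, Z k * star (Z k)) * P) =
          star P * (((∑ k : Fin d, Z k * star (Z k)) - 1) * P) + star P * P := by
      intro P
      noncomm_ring
    have hstep2 : (∑ f : Fin (n+1) → Fin d, GG S Z (List.ofFn f)) =
        (∑ g : Fin n → Fin d, star (EV Z (S.φ (List.ofFn g))) *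
            (((∑ k : Fin d, Z k * star (Z k)) - 1) * EV Z (S.φ (List.ofFn g))))
          + (∑ g : Fin n → Fin d, GG S Z (List.ofFn g))
          + FF S Z (sigmaWord d hd (n+1)) - FF S Z (sigmaWord d hd n) := by
      rw [hstep,
        Finset.sum_congr rfl fun g _ => hsplit (EV Z (S.φ (List.ofFn g))),
        Finset.sum_add_distrib]
      simp only [GG_def]
    have hA : (∑ g : Fin n → Fin d, star (EV Z (S.φ (List.ofFn g))) *
        (((∑ k : Fin d, Z k * star (Z k)) - 1) * EV Z (S.φ (List.ofFn g)))).PosDef := by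
      refine sum_conj_posDef hZ (fun g => EV Z (S.φ (List.ofFn g))) ?_
      simpa only [GG_def] using ih.1
    constructor
    · have hre2 : (∑ f : Fin (n+1) → Fin d, GG S Z (List.ofFn f)) =
          (∑ g : Fin n → Fin d, star (EV Z (S.φ (List.ofFn g))) *
              (((∑ k : Fin d, Z k * star (Z k)) - 1) * EV Z (S.φ (List.ofFn g))))
            + (((∑ g : Fin n → Fin d, GG S Z (List.ofFn g)) - FF S Z (sigmaWord d hd n))
              + FF S Z (sigmaWord d hd (n+1))) := by
        rw [hstep2]; abel
      rw [hre2]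
      exact hA.add_posSemidef (ih.2.add (FF_posSemidef S Z _))
    · have hre : (∑ f : Fin (n+1) → Fin d, GG S Z (List.ofFn f)) -
          FF S Z (sigmaWord d hd (n+1)) =
          (∑ g : Fin n → Fin d, star (EV Z (S.φ (List.ofFn g))) *
              (((∑ k : Fin d, Z k * star (Z k)) - 1) * EV Z (S.φ (List.ofFn g))))
            + ((∑ g : Fin n → Fin d, GG S Z (List.ofFn g)) - FF S Z (sigmaWord d hd n)) := by
        rw [hstep2]; abel
      rw [hre]
      exact hA.posSemidef.add ih.2

end SzegoAux

/-- if `(∑_k Z_k Z_k^*) − I` is positive definite (i.e. `Z` lies in the exterior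
of the closed row-ball), then `∑_{|σ| = n} φ_σ(Z^*)^* φ_σ(Z^*)` is positive definite; in
particular its determinant is nonzero. -/
theorem orthonormal_poly_no_zeros_outside {d m : ℕ} (hd : 1 ≤ d) (hm : 1 ≤ m)
    (S : SzegoSystem d) (n : ℕ) (Z : Fin d → Matrix (Fin m) (Fin m) ℂ)
    (hZ : ((∑ k : Fin d, Z k * star (Z k)) - (1 : Matrix (Fin m) (Fin m) ℂ)).PosDef) :
    (∑ f : Fin n → Fin d,
        star (evalM (fun j => star (Z j)) (S.φ (List.ofFn f))) *
          evalM (fun j => star (Z j)) (S.φ (List.ofFn f))).PosDef ∧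
      (∑ f : Fin n → Fin d,
        star (evalM (fun j => star (Z j)) (S.φ (List.ofFn f))) *
          evalM (fun j => star (Z j)) (S.φ (List.ofFn f))).det ≠ 0 := by
  have key := SzegoAux.main_induction S Z hd hZ n
  have heq : (∑ f : Fin n → Fin d,
      star (evalM (fun j => star (Z j)) (S.φ (List.ofFn f))) *
        evalM (fun j => star (Z j)) (S.φ (List.ofFn f))) =
      ∑ f : Fin n → Fin d, SzegoAux.GG S Z (List.ofFn f) := rfl
  rw [heq]
  exact ⟨key.1, key.1.det_pos.ne'⟩
end
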